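/- arXiv:2306.00788 — 7 statements merged into one kernel-verified Lean document; each statement's English description precedes it below -/
import Mathlib

section
/- Let C = (c_{k,i}) be a d×∞ real matrix with ∑_i c_{k,i}² < ∞ for all k, and let D_λ = diag(λ_1, λ_2, …) with λ_1 ≥ λ_2 ≥ ⋯ > 0 and λ_i → 0. If C D_λ C^T = I_d, then ‖C‖_F² = ∑_{k,i} c_{k,i}² ≥ ∑_{i=1}^d 1/λ_i, with equality when the rows of G := C √{D_λ} form an orthonormal set whose first j columns have total squared norm j for each j ≤ d. -/
/-- If `C D_lam Cᵀ = I_d` with `lam` positive, nonincreasing, tending to 0,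
then the Frobenius norm of `C` satisfies `‖C‖_F² ≥ ∑_{i<d} 1/lam i`, with equality when
the first `j` columns of `G = C √D_lam` have total squared norm `j` for each `j ≤ d`. -/
theorem frobenius_lower_bound_of_whitening
    (d : ℕ) (lam : ℕ → ℝ) (C : Fin d → ℕ → ℝ)
    (hmono : Antitone lam) (hpos : ∀ i, 0 < lam i)
    (hlim : Filter.Tendsto lam Filter.atTop (nhds 0))
    (hC2 : ∀ k : Fin d, Summable (fun i => C k i ^ 2))
    (hprod : ∀ k l : Fin d, Summable (fun i => C k i * lam i * C l i))
    (hwhite : ∀ k l : Fin d, (∑' i, C k i * lam i * C l i) = if k = l then 1 else 0) :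
    (∑ i ∈ Finset.range d, (lam i)⁻¹) ≤ ∑ k : Fin d, ∑' i, C k i ^ 2 ∧
      ((∀ j ≤ d, (∑ i ∈ Finset.range j, ∑ k : Fin d, (C k i * Real.sqrt (lam i)) ^ 2) = j) →
        (∑ k : Fin d, ∑' i, C k i ^ 2) = ∑ i ∈ Finset.range d, (lam i)⁻¹) := by
  set t : ℕ → ℝ := fun i => ∑ k : Fin d, C k i ^ 2 with ht_def
  have ht_nonneg : ∀ i, 0 ≤ t i := fun i => Finset.sum_nonneg fun k _ => sq_nonneg _
  have ht_sum : Summable t := summable_sum fun k _ => hC2 k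
  have hswap : (∑ k : Fin d, ∑' i, C k i ^ 2) = ∑' i, t i :=
    (Summable.tsum_finsetSum fun k _ => hC2 k).symm
  have hs_eq2 : ∀ i, lam i * t i = ∑ k : Fin d, C k i * lam i * C k i := by
    intro i
    simp only [ht_def, Finset.mul_sum]
    exact Finset.sum_congr rfl fun k _ => by ring
  have hs_eq : ∀ i, (∑ k : Fin d, (C k i * Real.sqrt (lam i)) ^ 2) = lam i * t i := by
    intro i
    have h := Real.mul_self_sqrt (hpos i).le
    simp only [ht_def, Finset.mul_sum]
    exact Finset.sum_congr rfl fun k _ => by linear_combination C k i ^ 2 * h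
  have hs_summable : Summable (fun i => lam i * t i) := by
    simp only [hs_eq2]
    exact summable_sum fun k _ => hprod k k
  have hs_tsum : (∑' i, lam i * t i) = d := by
    simp only [hs_eq2]
    rw [Summable.tsum_finsetSum fun k _ => hprod k k]
    simp [hwhite]
  -- each column of G has squared norm at most 1
  have hs_le_one : ∀ i0, lam i0 * t i0 ≤ 1 := by
    intro i0
    set G : Fin d → ℕ → ℝ := fun k i => C k i * Real.sqrt (lam i) with hG
    have hGmul : ∀ (k l : Fin d) (j : ℕ), G k j * G l j = C k j * lam j * C l j := by
      intro k l j
      have h := Real.mul_self_sqrt (hpos j).le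
      simp only [hG]
      linear_combination C k j * C l j * h
    set w : ℕ → ℝ := fun j => ∑ k : Fin d, G k j * G k i0 with hw
    have hwi0 : w i0 = lam i0 * t i0 := by
      simp only [hw]
      rw [hs_eq2]
      exact Finset.sum_congr rfl fun k _ => hGmul k k i0
    have hterm : ∀ j, w j ^ 2
        = ∑ k : Fin d, ∑ l : Fin d, (G k i0 * G l i0) * (C k j * lam j * C l j) := by
      intro j
      simp only [hw]
      rw [sq, Finset.sum_mul_sum]
      refine Finset.sum_congr rfl fun k _ => Finset.sum_congr rfl fun l _ => ?_
      rw [← hGmul k l j]; ring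
    have hw2_summable : Summable (fun j => w j ^ 2) := by
      simp only [hterm]
      exact summable_sum fun k _ => summable_sum fun l _ => (hprod k l).mul_left _
    have hw2_tsum : (∑' j, w j ^ 2) = lam i0 * t i0 := by
      simp only [hterm]
      rw [Summable.tsum_finsetSum (fun k _ => summable_sum fun l _ => (hprod k l).mul_left _)]
      have hst : ∀ k : Fin d, (∑' j, ∑ l : Fin d, (G k i0 * G l i0) * (C k j * lam j * C l j))
          = ∑ l : Fin d, (G k i0 * G l i0) * ∑' j, C k j * lam j * C l j := by
        intro k
        rw [Summable.tsum_finsetSum (fun l _ => (hprod k l).mul_left _)]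
        exact Finset.sum_congr rfl fun l _ => tsum_mul_left
      simp only [hst, hwhite, mul_ite, mul_one, mul_zero, Finset.sum_ite_eq,
        Finset.mem_univ, if_true]
      rw [hs_eq2]
      exact Finset.sum_congr rfl fun k _ => hGmul k k i0
    have key : (lam i0 * t i0) ^ 2 ≤ lam i0 * t i0 := by
      calc (lam i0 * t i0) ^ 2 = w i0 ^ 2 := by rw [hwi0]
        _ ≤ ∑' j, w j ^ 2 := Summable.le_tsum hw2_summable i0 (fun j _ => sq_nonneg _)
        _ = lam i0 * t i0 := hw2_tsum
    nlinarith [mul_nonneg (hpos i0).le (ht_nonneg i0)]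
  rcases Nat.eq_zero_or_pos d with hd | hd
  · subst hd
    constructor
    · simp
    · intro _
      simp
  -- d ≥ 1 case
  have hμ : 0 < lam (d - 1) := hpos _
  -- the lower bound
  have hmain : (∑ i ∈ Finset.range d, (lam i)⁻¹) ≤ ∑' i, t i := by
    set F : ℕ → ℝ := fun i => t i - (if i < d then (lam i)⁻¹ else 0) with hF
    set Gg : ℕ → ℝ := fun i => (lam i * t i - if i < d then 1 else 0) / lam (d - 1) with hGg
    have hind1 : Summable (fun i => if i < d then (lam i)⁻¹ else 0) :=
      summable_of_ne_finset_zero (s := Finset.range d)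
        (fun i hi => by simp only [Finset.mem_range] at hi; simp [hi])
    have hind2 : Summable (fun i => if i < d then (1 : ℝ) else 0) :=
      summable_of_ne_finset_zero (s := Finset.range d)
        (fun i hi => by simp only [Finset.mem_range] at hi; simp [hi])
    have hF_sum : Summable F := ht_sum.sub hind1
    have hG_sum : Summable Gg := (hs_summable.sub hind2).div_const _
    have hz1 : ∀ i ∉ Finset.range d, (if i < d then (lam i)⁻¹ else 0) = 0 := by
      intro i hi
      simp only [Finset.mem_range, not_lt] at hi
      exact if_neg (by omega)
    have hz2 : ∀ i ∉ Finset.range d, (if i < d then (1 : ℝ) else 0) = 0 := by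
      intro i hi
      simp only [Finset.mem_range, not_lt] at hi
      exact if_neg (by omega)
    have htsumF : (∑' i, F i) = (∑' i, t i) - ∑ i ∈ Finset.range d, (lam i)⁻¹ := by
      simp only [hF]
      rw [Summable.tsum_sub ht_sum hind1, tsum_eq_sum hz1]
      congr 1
      exact Finset.sum_congr rfl fun i hi => by simp [Finset.mem_range.1 hi]
    have htsumG : (∑' i, Gg i) = 0 := by
      simp only [hGg]
      rw [tsum_div_const, Summable.tsum_sub hs_summable hind2, hs_tsum, tsum_eq_sum hz2]
      rw [Finset.sum_congr rfl fun i hi => if_pos (Finset.mem_range.1 hi)]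
      simp
    have hle : ∀ i, Gg i ≤ F i := by
      intro i
      simp only [hF, hGg]
      by_cases hi : i < d
      · simp only [hi, if_true]
        have h1 : lam i * t i ≤ 1 := hs_le_one i
        have h2 : lam (d - 1) ≤ lam i := hmono (by omega)
        have hinv : lam i * (lam i)⁻¹ = 1 := mul_inv_cancel₀ (hpos i).ne'
        have htle : t i ≤ (lam i)⁻¹ := by
          rw [← hinv] at h1
          exact le_of_mul_le_mul_left h1 (hpos i)
        rw [div_le_iff₀ hμ]
        nlinarith [mul_nonneg (sub_nonneg.2 htle) (sub_nonneg.2 h2)]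
      · simp only [hi, if_false, sub_zero]
        have h2 : lam i ≤ lam (d - 1) := hmono (by omega)
        rw [div_le_iff₀ hμ]
        nlinarith [ht_nonneg i]
    have := Summable.tsum_le_tsum hle hG_sum hF_sum
    rw [htsumG, htsumF] at this
    linarith
  refine ⟨by rw [hswap]; exact hmain, ?_⟩
  intro H
  have hs1 : ∀ i < d, lam i * t i = 1 := by
    intro i hi
    have hHi := H i (le_of_lt hi)
    have hHsi := H (i + 1) hi
    simp only [hs_eq] at hHi hHsi
    rw [Finset.sum_range_succ, hHi] at hHsi
    push_cast at hHsi
    linarith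
  have hs0 : ∀ i, d ≤ i → t i = 0 := by
    intro i0 hi0
    have hi0notin : i0 ∉ Finset.range d := by simp; omega
    have hsum_le : (∑ i ∈ insert i0 (Finset.range d), lam i * t i) ≤ ∑' i, lam i * t i :=
      Summable.sum_le_tsum _ (fun i _ => mul_nonneg (hpos i).le (ht_nonneg i)) hs_summable
    rw [Finset.sum_insert hi0notin,
      Finset.sum_congr rfl (fun i hi => hs1 i (Finset.mem_range.1 hi)), hs_tsum] at hsum_le
    simp only [Finset.sum_const, Finset.card_range, nsmul_eq_mul, mul_one] at hsum_le
    have h0 : lam i0 * t i0 = 0 :=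
      le_antisymm (by linarith) (mul_nonneg (hpos i0).le (ht_nonneg i0))
    rcases mul_eq_zero.1 h0 with h | h
    · exact absurd h (hpos i0).ne'
    · exact h
  rw [hswap, tsum_eq_sum (s := Finset.range d)
      (fun i hi => hs0 i (by simpa [Finset.mem_range, not_lt] using hi))]
  refine Finset.sum_congr rfl fun i hi => ?_
  have h1 := hs1 i (Finset.mem_range.1 hi)
  have := hpos i
  field_simp
  linarith
end

section
/- For block masking with flipping on {−1,1}^d (mask a uniformly random contiguous block of r coordinates, then flip each remaining coordinate independently with probability α/2, where r = ⌈(α/2)d⌉ in context but here take general r), one has ∑_a p(a|x)²/P_A(a) = 2^{d−r} (1 − α + α²/2)^{d−r} = (2 − 2α + α²)^{d−r} for every x; hence κ² ≤ (α² − 2α + 2)^{(1−α/2) d}. -/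
open Finset

/-- Number of unmasked coordinates of `a` that disagree with `x` (flipped coordinates). -/
def flipCount {d : ℕ} (x : Fin d → Bool) (a : Fin d → Option Bool) : ℕ :=
  (Finset.univ.filter (fun i => a i ≠ none ∧ a i ≠ some (x i))).card

/-- Conditional density `p(a|x)` of block masking with flipping: mask a uniformly random
contiguous block of `r` coordinates, then independently flip each remaining coordinate
with probability `α/2`. -/
noncomputable def pBlockFlip {d : ℕ} (r : ℕ) (α : ℝ) (x : Fin d → Bool)
    (a : Fin d → Option Bool) : ℝ :=
  (∑ i ∈ Finset.range (d - r + 1),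
      if (∀ j : Fin d, a j = none ↔ (i ≤ (j : ℕ) ∧ (j : ℕ) < i + r)) then
        (α / 2) ^ flipCount x a * (1 - α / 2) ^ (d - r - flipCount x a)
      else 0) / (d - r + 1)

/-- Marginal `P_A(a)` under the uniform distribution on `{−1,1}^d`. -/
noncomputable def pABlockFlip {d : ℕ} (r : ℕ) (α : ℝ) (a : Fin d → Option Bool) : ℝ :=
  (∑ x : Fin d → Bool, pBlockFlip r α x a) / 2 ^ d

lemma sum_fun_prod {d : ℕ} {β : Type*} [Fintype β] [DecidableEq β] (f : Fin d → β → ℝ) :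
    ∑ x : Fin d → β, ∏ j, f j (x j) = ∏ j, ∑ b : β, f j b := by
  rw [Finset.prod_univ_sum, Fintype.piFinset_univ]

lemma card_block {d : ℕ} (i r : ℕ) (h : i + r ≤ d) :
    (univ.filter fun j : Fin d => i ≤ (j:ℕ) ∧ (j:ℕ) < i + r).card = r := by
  rw [Finset.card_filter, Fin.sum_univ_eq_sum_range (fun n => if i ≤ n ∧ n < i + r then 1 else 0),
    ← Finset.card_filter]
  have : (Finset.range d).filter (fun n => i ≤ n ∧ n < i + r) = Finset.Ico i (i+r) := by
    ext n; simp only [Finset.mem_filter, Finset.mem_range, Finset.mem_Ico]; omega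
  rw [this, Nat.card_Ico]; omega

lemma card_nonblock {d : ℕ} (i r : ℕ) (h : i + r ≤ d) :
    (univ.filter fun j : Fin d => ¬ (i ≤ (j:ℕ) ∧ (j:ℕ) < i + r)).card = d - r := by
  have h1 := Finset.card_filter_add_card_filter_not
    (s := (univ : Finset (Fin d))) (fun j : Fin d => i ≤ (j:ℕ) ∧ (j:ℕ) < i + r)
  rw [card_block i r h] at h1
  simp only [Finset.card_univ, Fintype.card_fin] at h1
  omega

lemma w_prod {d : ℕ} (r : ℕ) (u v : ℝ) (x : Fin d → Bool) (a : Fin d → Option Bool)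
    (hT : (univ.filter fun j => a j ≠ none).card = d - r) :
    u ^ flipCount x a * v ^ (d - r - flipCount x a)
      = ∏ j : Fin d, (if a j = none then (1:ℝ) else if a j = some (x j) then v else u) := by
  classical
  rw [Finset.prod_ite, Finset.prod_const_one, one_mul, Finset.prod_ite,
    Finset.prod_const, Finset.prod_const]
  have hfc : ((univ.filter fun j : Fin d => ¬ a j = none).filter
      fun j => ¬ a j = some (x j)).card = flipCount x a := by
    rw [Finset.filter_filter]; rfl
  have hsplit := Finset.card_filter_add_card_filter_not
    (s := univ.filter fun j : Fin d => ¬ a j = none) (fun j => a j = some (x j))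
  have hT' : (univ.filter fun j : Fin d => ¬ a j = none).card = d - r := hT
  rw [hfc]
  have : ((univ.filter fun j : Fin d => ¬ a j = none).filter
      fun j => a j = some (x j)).card = d - r - flipCount x a := by omega
  rw [this, mul_comm]


/-- for block masking with flipping,
`∑_a p(a|x)²/P_A(a) = (2 − 2α + α²)^{d−r}` for every `x`; hence with
`r = ⌈(α/2) d⌉` the augmentation complexity satisfies
`κ² ≤ (α² − 2α + 2)^{(1−α/2) d}`. -/
theorem blockFlip_augmentation_complexity
    (d r : ℕ) (α : ℝ) (hd : 0 < d) (hα0 : 0 < α) (hα1 : α < 1) (hrd : r ≤ d) :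
    (∀ x : Fin d → Bool,
        (∑ a : Fin d → Option Bool, (pBlockFlip r α x a) ^ 2 / pABlockFlip r α a)
          = (2 - 2 * α + α ^ 2) ^ (d - r)) ∧
      (r = ⌈(α / 2) * d⌉₊ →
        ∀ x : Fin d → Bool,
          (∑ a : Fin d → Option Bool, (pBlockFlip r α x a) ^ 2 / pABlockFlip r α a)
            ≤ (α ^ 2 - 2 * α + 2) ^ ((1 - α / 2) * d)) := by
  have key : ∀ x : Fin d → Bool,
      (∑ a : Fin d → Option Bool, (pBlockFlip r α x a) ^ 2 / pABlockFlip r α a)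
        = (2 - 2 * α + α ^ 2) ^ (d - r) := by
    classical
    have hD0 : (0:ℝ) < (d:ℝ) - r + 1 := by
      have : (r:ℝ) ≤ d := by exact_mod_cast hrd
      linarith
    -- p(a|x) in closed form
    have hp : ∀ (y : Fin d → Bool) (a : Fin d → Option Bool),
        pBlockFlip r α y a
          = (((Finset.range (d - r + 1)).filter
              (fun i => ∀ j : Fin d, a j = none ↔ (i ≤ (j:ℕ) ∧ (j:ℕ) < i + r))).card : ℝ)
            * ((α/2) ^ flipCount y a * (1 - α/2) ^ (d - r - flipCount y a)) / ((d:ℝ) - r + 1) := by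
      intro y a
      unfold pBlockFlip
      rw [← Finset.sum_filter, Finset.sum_const, nsmul_eq_mul]
    -- under the block condition, the unmasked set has d - r elements
    have hcond_card : ∀ (a : Fin d → Option Bool) (i : ℕ), i ≤ d - r →
        (∀ j : Fin d, a j = none ↔ (i ≤ (j:ℕ) ∧ (j:ℕ) < i + r)) →
        (univ.filter fun j => a j ≠ none).card = d - r := by
      intro a i hi hc
      have hir : i + r ≤ d := by omega
      have : (univ.filter fun j : Fin d => a j ≠ none)
          = (univ.filter fun j : Fin d => ¬ (i ≤ (j:ℕ) ∧ (j:ℕ) < i + r)) := by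
        apply Finset.filter_congr; intro j _; simp only [ne_eq, hc j]
      rw [this, card_nonblock i r hir]
    -- summing w over x gives 2^r
    have hsum_w : ∀ (a : Fin d → Option Bool),
        (univ.filter fun j => a j ≠ none).card = d - r →
        ∑ y : Fin d → Bool, (α/2) ^ flipCount y a * (1 - α/2) ^ (d - r - flipCount y a)
          = 2 ^ r := by
      intro a hT
      rw [Finset.sum_congr rfl (fun y _ => w_prod r (α/2) (1-α/2) y a hT),
        sum_fun_prod (fun j b => if a j = none then (1:ℝ) else if a j = some b then (1-α/2) else (α/2))]
      have hfac : ∀ j : Fin d,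
          (∑ b : Bool, (if a j = none then (1:ℝ) else if a j = some b then (1-α/2) else (α/2)))
          = if a j = none then 2 else 1 := by
        intro j
        rcases h : a j with _ | c
        · simp [h]
        · rcases c <;> simp [h, Fintype.sum_bool] <;> ring
      rw [Finset.prod_congr rfl (fun j _ => hfac j), Finset.prod_ite,
        Finset.prod_const, Finset.prod_const, one_pow, mul_one]
      have h2 := Finset.card_filter_add_card_filter_not
        (s := (univ : Finset (Fin d))) (fun j : Fin d => a j = none)
      have hT' : (univ.filter fun j : Fin d => ¬ a j = none).card = d - r := hT
      simp only [Finset.card_univ, Fintype.card_fin] at h2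
      congr 1
      omega
    -- the marginal in closed form
    have hpA : ∀ a : Fin d → Option Bool,
        pABlockFlip r α a
          = (((Finset.range (d - r + 1)).filter
              (fun i => ∀ j : Fin d, a j = none ↔ (i ≤ (j:ℕ) ∧ (j:ℕ) < i + r))).card : ℝ)
            * 2 ^ r / (2 ^ d * ((d:ℝ) - r + 1)) := by
      intro a
      unfold pABlockFlip
      rw [Finset.sum_congr rfl (fun y _ => hp y a)]
      set M := (((Finset.range (d - r + 1)).filter
          (fun i => ∀ j : Fin d, a j = none ↔ (i ≤ (j:ℕ) ∧ (j:ℕ) < i + r))).card) with hM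
      by_cases hM0 : M = 0
      · simp [hM0]
      · obtain ⟨i, hi⟩ := Finset.card_pos.mp (Nat.pos_of_ne_zero hM0)
        rw [Finset.mem_filter, Finset.mem_range] at hi
        have hT := hcond_card a i (by omega) hi.2
        have hre : ∀ y : Fin d → Bool,
            (M:ℝ) * ((α/2) ^ flipCount y a * (1 - α/2) ^ (d - r - flipCount y a)) / ((d:ℝ) - r + 1)
            = ((M:ℝ)/((d:ℝ) - r + 1)) * ((α/2) ^ flipCount y a * (1 - α/2) ^ (d - r - flipCount y a)) := by
          intro y; ring
        rw [Finset.sum_congr rfl (fun y _ => hre y), ← Finset.mul_sum, hsum_w a hT]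
        field_simp
    intro x
    -- each term of the final sum
    have hterm : ∀ a : Fin d → Option Bool,
        (pBlockFlip r α x a) ^ 2 / pABlockFlip r α a
          = (2:ℝ) ^ d / (2 ^ r * ((d:ℝ) - r + 1))
            * ((((Finset.range (d - r + 1)).filter
                (fun i => ∀ j : Fin d, a j = none ↔ (i ≤ (j:ℕ) ∧ (j:ℕ) < i + r))).card : ℝ)
              * ((α/2) ^ flipCount x a * (1 - α/2) ^ (d - r - flipCount x a)) ^ 2) := by
      intro a
      rw [hp x a, hpA a]
      set M := (((Finset.range (d - r + 1)).filter
          (fun i => ∀ j : Fin d, a j = none ↔ (i ≤ (j:ℕ) ∧ (j:ℕ) < i + r))).card) with hM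
      by_cases hM0 : M = 0
      · simp [hM0]
      · have hMpos : (0:ℝ) < M := by exact_mod_cast Nat.pos_of_ne_zero hM0
        have h2d : (0:ℝ) < 2 ^ d := by positivity
        have h2r : (0:ℝ) < 2 ^ r := by positivity
        field_simp
    rw [Finset.sum_congr rfl (fun a _ => hterm a), ← Finset.mul_sum]
    -- the remaining sum over a, swapped with the sum over block positions
    have hMsum : ∑ a : Fin d → Option Bool,
        ((((Finset.range (d - r + 1)).filter
            (fun i => ∀ j : Fin d, a j = none ↔ (i ≤ (j:ℕ) ∧ (j:ℕ) < i + r))).card : ℝ)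
          * ((α/2) ^ flipCount x a * (1 - α/2) ^ (d - r - flipCount x a)) ^ 2)
        = ((d:ℝ) - r + 1) * ((α/2)^2 + (1 - α/2)^2) ^ (d - r) := by
      have hsw : ∀ a : Fin d → Option Bool,
          ((((Finset.range (d - r + 1)).filter
              (fun i => ∀ j : Fin d, a j = none ↔ (i ≤ (j:ℕ) ∧ (j:ℕ) < i + r))).card : ℝ)
            * ((α/2) ^ flipCount x a * (1 - α/2) ^ (d - r - flipCount x a)) ^ 2)
          = ∑ i ∈ Finset.range (d - r + 1),
              (if (∀ j : Fin d, a j = none ↔ (i ≤ (j:ℕ) ∧ (j:ℕ) < i + r)) then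
                ((α/2) ^ flipCount x a * (1 - α/2) ^ (d - r - flipCount x a)) ^ 2 else 0) := by
        intro a
        rw [← Finset.sum_boole, Finset.sum_mul]
        exact Finset.sum_congr rfl (fun i _ => by split <;> simp)
      rw [Finset.sum_congr rfl (fun a _ => hsw a), Finset.sum_comm]
      have hinner : ∀ i ∈ Finset.range (d - r + 1),
          (∑ a : Fin d → Option Bool,
            if (∀ j : Fin d, a j = none ↔ (i ≤ (j:ℕ) ∧ (j:ℕ) < i + r)) then
              ((α/2) ^ flipCount x a * (1 - α/2) ^ (d - r - flipCount x a)) ^ 2 else 0)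
          = ((α/2)^2 + (1 - α/2)^2) ^ (d - r) := by
        intro i hi
        rw [Finset.mem_range] at hi
        have hir : i + r ≤ d := by omega
        have hprodform : ∀ a : Fin d → Option Bool,
            (if (∀ j : Fin d, a j = none ↔ (i ≤ (j:ℕ) ∧ (j:ℕ) < i + r)) then
              ((α/2) ^ flipCount x a * (1 - α/2) ^ (d - r - flipCount x a)) ^ 2 else 0)
            = ∏ j : Fin d,
                (if (i ≤ (j:ℕ) ∧ (j:ℕ) < i + r) then (if a j = none then (1:ℝ) else 0)
                 else (if a j = none then 0
                       else if a j = some (x j) then (1 - α/2)^2 else (α/2)^2)) := by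
          intro a
          by_cases hc : ∀ j : Fin d, a j = none ↔ (i ≤ (j:ℕ) ∧ (j:ℕ) < i + r)
          · rw [if_pos hc]
            have hT := hcond_card a i (by omega) hc
            have hsq : ((α/2) ^ flipCount x a * (1 - α/2) ^ (d - r - flipCount x a)) ^ 2
                = ((α/2)^2) ^ flipCount x a * ((1 - α/2)^2) ^ (d - r - flipCount x a) := by
              rw [mul_pow, ← pow_mul, ← pow_mul, mul_comm (flipCount x a) 2,
                mul_comm (d - r - flipCount x a) 2, pow_mul, pow_mul]
            rw [hsq, w_prod r ((α/2)^2) ((1-α/2)^2) x a hT]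
            refine Finset.prod_congr rfl (fun j _ => ?_)
            by_cases hb : (i ≤ (j:ℕ) ∧ (j:ℕ) < i + r)
            · simp [hb, (hc j).mpr hb]
            · have : ¬ a j = none := fun h => hb ((hc j).mp h)
              simp [hb, this]
          · rw [if_neg hc]
            rw [not_forall] at hc
            obtain ⟨j, hj⟩ := hc
            refine (Finset.prod_eq_zero (Finset.mem_univ j) ?_).symm
            by_cases hb : (i ≤ (j:ℕ) ∧ (j:ℕ) < i + r)
            · have : ¬ a j = none := fun h => hj ⟨fun _ => hb, fun _ => h⟩
              simp [hb, this]
            · have : a j = none := by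
                by_contra h
                exact hj ⟨fun h' => (h h').elim, fun hb' => (hb hb').elim⟩
              simp [hb, this]
        rw [Finset.sum_congr rfl (fun a _ => hprodform a),
          sum_fun_prod (fun j v =>
            (if (i ≤ (j:ℕ) ∧ (j:ℕ) < i + r) then (if v = none then (1:ℝ) else 0)
             else (if v = none then 0
                   else if v = some (x j) then (1 - α/2)^2 else (α/2)^2)))]
        have hfac : ∀ j : Fin d,
            (∑ v : Option Bool,
              (if (i ≤ (j:ℕ) ∧ (j:ℕ) < i + r) then (if v = none then (1:ℝ) else 0)
               else (if v = none then 0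
                     else if v = some (x j) then (1 - α/2)^2 else (α/2)^2)))
            = if (i ≤ (j:ℕ) ∧ (j:ℕ) < i + r) then 1 else ((α/2)^2 + (1 - α/2)^2) := by
          intro j
          by_cases hb : (i ≤ (j:ℕ) ∧ (j:ℕ) < i + r)
          · simp [hb, Fintype.sum_option]
          · rcases hx : x j <;> simp [hb, hx, Fintype.sum_option, Fintype.sum_bool] <;> ring
        rw [Finset.prod_congr rfl (fun j _ => hfac j), Finset.prod_ite,
          Finset.prod_const_one, one_mul, Finset.prod_const, card_nonblock i r hir]
      rw [Finset.sum_congr rfl hinner, Finset.sum_const, Finset.card_range, nsmul_eq_mul]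
      push_cast [Nat.cast_sub hrd]
      ring
    rw [hMsum]
    -- final numerical simplification
    have h2dr : (2:ℝ) ^ d = 2 ^ (d - r) * 2 ^ r := by
      rw [← pow_add, Nat.sub_add_cancel hrd]
    have hbase : (2:ℝ) * ((α/2)^2 + (1 - α/2)^2) = 2 - 2*α + α^2 := by ring
    rw [← hbase, mul_pow, h2dr]
    field_simp
  refine ⟨key, ?_⟩
  intro hr x
  rw [key x]
  have hb : (1:ℝ) ≤ α ^ 2 - 2 * α + 2 := by nlinarith [sq_nonneg (1 - α)]
  have hbase : (2 - 2 * α + α ^ 2 : ℝ) = α ^ 2 - 2 * α + 2 := by ring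
  rw [hbase, ← Real.rpow_natCast (α ^ 2 - 2 * α + 2) (d - r)]
  apply Real.rpow_le_rpow_of_exponent_le hb
  have h1 : (α / 2) * d ≤ (r:ℝ) := by rw [hr]; exact Nat.le_ceil _
  have h2 : ((d - r : ℕ):ℝ) = (d:ℝ) - r := by push_cast [Nat.cast_sub hrd]; ring
  rw [h2]; linarith
end

section
/- Let F_2 = { f₁ f₂ : f₁, f₂ ∈ H_Γ, ‖f₁‖_{H_Γ} ≤ 1, ‖f₂‖_{H_Γ} ≤ 1 } and suppose K_X(x,x) ≤ κ² almost surely. Then the Rademacher complexity of F_2 over N i.i.d. samples satisfies R_N(F_2) ≤ κ²/√N. -/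
open MeasureTheory


open MeasureTheory Finset

local notation "⟪" x ", " y "⟫" => @inner ℝ _ _ x y

/-- Key geometric lemma: nonnegativity of the "Frobenius" quantity and the bound
on the bilinear sums. -/
lemma key_frobenius {H : Type*} [NormedAddCommGroup H] [InnerProductSpace ℝ H]
    {N : ℕ} (φ : Fin N → H) (ε : Fin N → ℝ) :
    0 ≤ (∑ k, ∑ l, ε k * ε l * ⟪φ k, φ l⟫ ^ 2) ∧
    ∀ u v : H, ‖u‖ ≤ 1 → ‖v‖ ≤ 1 →
      |∑ k, ε k * (⟪u, φ k⟫ * ⟪v, φ k⟫)| ≤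
        Real.sqrt (∑ k, ∑ l, ε k * ε l * ⟪φ k, φ l⟫ ^ 2) := by
  classical
  set E := Submodule.span ℝ (Set.range φ) with hE
  haveI : FiniteDimensional ℝ E := FiniteDimensional.span_of_finite ℝ (Set.finite_range φ)
  set n := Module.finrank ℝ E with hn
  set b := stdOrthonormalBasis ℝ E with hb
  set e : Fin n → H := fun i => (b i : H) with he
  have hφE : ∀ k, φ k ∈ E := fun k => Submodule.subset_span ⟨k, rfl⟩
  have pars : ∀ x y : H, x ∈ E → y ∈ E →
      ∑ i, ⟪x, e i⟫ * ⟪e i, y⟫ = ⟪x, y⟫ := by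
    intro x y hx hy
    have := b.sum_inner_mul_inner (⟨x, hx⟩ : E) (⟨y, hy⟩ : E)
    simpa [Submodule.coe_inner, he] using this
  set w : Fin n → H := fun i => ∑ k, (ε k * ⟪φ k, e i⟫) • φ k with hw
  have hA : (∑ k, ∑ l, ε k * ε l * ⟪φ k, φ l⟫ ^ 2) = ∑ i, ‖w i‖ ^ 2 := by
    have expand : ∀ i, ‖w i‖ ^ 2 =
        ∑ k, ∑ l, (ε k * ⟪φ k, e i⟫) * ((ε l * ⟪φ l, e i⟫) * ⟪φ k, φ l⟫) := by
      intro i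
      rw [← real_inner_self_eq_norm_sq]
      simp only [hw, sum_inner, inner_sum, real_inner_smul_left, real_inner_smul_right,
        Finset.mul_sum]
      refine Finset.sum_congr rfl fun k _ => Finset.sum_congr rfl fun l _ => ?_
      rw [real_inner_comm (φ l) (φ k)]
    calc (∑ k, ∑ l, ε k * ε l * ⟪φ k, φ l⟫ ^ 2)
        = ∑ k, ∑ l, ε k * ε l * ⟪φ k, φ l⟫ * (∑ i, ⟪φ k, e i⟫ * ⟪e i, φ l⟫) := by
          refine Finset.sum_congr rfl fun k _ => Finset.sum_congr rfl fun l _ => ?_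
          rw [pars _ _ (hφE k) (hφE l)]; ring
      _ = ∑ i, ∑ k, ∑ l, (ε k * ⟪φ k, e i⟫) * ((ε l * ⟪φ l, e i⟫) * ⟪φ k, φ l⟫) := by
          have : ∀ k l : Fin N, ε k * ε l * ⟪φ k, φ l⟫ * (∑ i, ⟪φ k, e i⟫ * ⟪e i, φ l⟫)
              = ∑ i, (ε k * ⟪φ k, e i⟫) * ((ε l * ⟪φ l, e i⟫) * ⟪φ k, φ l⟫) := by
            intro k l
            rw [Finset.mul_sum]
            refine Finset.sum_congr rfl fun i _ => ?_
            rw [real_inner_comm (e i) (φ l)]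
            ring
          simp only [this]
          refine Eq.trans (Finset.sum_congr rfl fun k _ => Finset.sum_comm) Finset.sum_comm
      _ = ∑ i, ‖w i‖ ^ 2 := by
          refine Finset.sum_congr rfl fun i _ => (expand i).symm
  constructor
  · rw [hA]; exact Finset.sum_nonneg fun i _ => sq_nonneg _
  intro u v hu hv
  set S : H := ∑ k, (ε k * ⟪v, φ k⟫) • φ k with hS
  have hSE : S ∈ E := Submodule.sum_mem _ fun k _ => Submodule.smul_mem _ _ (hφE k)
  have htarget : (∑ k, ε k * (⟪u, φ k⟫ * ⟪v, φ k⟫)) = ⟪u, S⟫ := by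
    simp only [hS, inner_sum, real_inner_smul_right]
    refine Finset.sum_congr rfl fun k _ => ?_
    ring
  have hSi : ∀ i, ⟪S, e i⟫ = ⟪v, w i⟫ := by
    intro i
    simp only [hS, hw, sum_inner, inner_sum, real_inner_smul_left, real_inner_smul_right]
    refine Finset.sum_congr rfl fun k _ => ?_
    ring
  have hSnorm : ‖S‖ ^ 2 ≤ ∑ i, ‖w i‖ ^ 2 := by
    have : ‖S‖ ^ 2 = ∑ i, ⟪S, e i⟫ * ⟪e i, S⟫ := by
      rw [pars _ _ hSE hSE, real_inner_self_eq_norm_sq]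
    rw [this]
    refine Finset.sum_le_sum fun i _ => ?_
    have h1 : ⟪e i, S⟫ = ⟪S, e i⟫ := real_inner_comm _ _
    rw [h1, ← sq, hSi i]
    have h2 := abs_real_inner_le_norm v (w i)
    have h3 : |(⟪v, w i⟫ : ℝ)| ≤ ‖w i‖ := by
      refine h2.trans ?_
      have := mul_le_of_le_one_left (norm_nonneg (w i)) hv
      linarith
    calc ⟪v, w i⟫ ^ 2 = |(⟪v, w i⟫ : ℝ)| ^ 2 := (sq_abs _).symm
      _ ≤ ‖w i‖ ^ 2 := by nlinarith [abs_nonneg (⟪v, w i⟫ : ℝ)]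
  rw [htarget, hA]
  have hid : |(⟪u, S⟫ : ℝ)| ≤ ‖S‖ := by
    refine (abs_real_inner_le_norm u S).trans ?_
    have := mul_le_of_le_one_left (norm_nonneg S) hu
    linarith
  refine hid.trans ?_
  have hS2 : ‖S‖ = Real.sqrt (‖S‖ ^ 2) := by
    rw [Real.sqrt_sq (norm_nonneg S)]
  rw [hS2]
  exact Real.sqrt_le_sqrt hSnorm

lemma sum_sign_mul_sign {N : ℕ} (k l : Fin N) :
    ∑ σ : Fin N → Bool, ((if σ k then (1 : ℝ) else -1) * (if σ l then (1 : ℝ) else -1))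
      = if k = l then (2 : ℝ) ^ N else 0 := by
  classical
  by_cases h : k = l
  · subst h
    rw [if_pos rfl]
    have h1 : ∀ σ : Fin N → Bool,
        (if σ k then (1 : ℝ) else -1) * (if σ k then (1 : ℝ) else -1) = 1 := by
      intro σ; by_cases hb : σ k <;> simp [hb]
    rw [Finset.sum_congr rfl fun σ _ => h1 σ, Finset.sum_const]
    simp [Fintype.card_fun]
  · rw [if_neg h]
    refine Finset.sum_ninvolution (fun σ => Function.update σ k (!σ k)) ?_ ?_
      (fun _ => Finset.mem_univ _) ?_
    · intro σ
      have hk : Function.update σ k (!σ k) k = !σ k := Function.update_self _ _ _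
      have hl : Function.update σ k (!σ k) l = σ l := Function.update_of_ne (Ne.symm h) _ _
      simp only [hk, hl]
      by_cases h1 : σ k <;> by_cases h2 : σ l <;> simp [h1, h2]
    · intro σ _ hEq
      have := congrFun hEq k
      change Function.update σ k (!σ k) k = σ k at this
      rw [Function.update_self] at this
      exact (Bool.not_ne_self (σ k)) this
    · intro σ
      funext j
      by_cases hj : j = k
      · subst hj; simp [Function.update_self]
      · simp [Function.update_of_ne hj]

lemma per_sample {H : Type*} [NormedAddCommGroup H] [InnerProductSpace ℝ H]
    {N : ℕ} (hN : 0 < N) (κ : ℝ) (hκ : 0 ≤ κ) (φ : Fin N → H) (hφ : ∀ k, ‖φ k‖ ≤ κ) :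
    ((2 : ℝ) ^ N)⁻¹ *
        ∑ σ : Fin N → Bool,
          sSup {t : ℝ | ∃ u v : H, ‖u‖ ≤ 1 ∧ ‖v‖ ≤ 1 ∧
            t = |(N : ℝ)⁻¹ * ∑ k : Fin N,
                  (if σ k then (1 : ℝ) else -1) *
                    ((@inner ℝ _ _ u (φ k)) * (@inner ℝ _ _ v (φ k)))|}
      ∈ Set.Icc (0 : ℝ) (κ ^ 2 / Real.sqrt N) := by
  classical
  set ε : (Fin N → Bool) → Fin N → ℝ := fun σ k => if σ k then 1 else -1 with hεdef
  set A : (Fin N → Bool) → ℝ :=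
    fun σ => ∑ k, ∑ l, ε σ k * ε σ l * (⟪φ k, φ l⟫ : ℝ) ^ 2 with hAdef
  have hkey := fun σ : Fin N → Bool => key_frobenius φ (ε σ)
  have hNinv : (0 : ℝ) ≤ (N : ℝ)⁻¹ := by positivity
  have hub : ∀ σ : Fin N → Bool, ∀ t ∈ {t : ℝ | ∃ u v : H, ‖u‖ ≤ 1 ∧ ‖v‖ ≤ 1 ∧
      t = |(N : ℝ)⁻¹ * ∑ k : Fin N, (if σ k then (1 : ℝ) else -1) *
            ((@inner ℝ _ _ u (φ k)) * (@inner ℝ _ _ v (φ k)))|},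
      t ≤ (N : ℝ)⁻¹ * Real.sqrt (A σ) := by
    rintro σ t ⟨u, v, hu, hv, rfl⟩
    rw [abs_mul, abs_inv, Nat.abs_cast]
    exact mul_le_mul_of_nonneg_left ((hkey σ).2 u v hu hv) hNinv
  have h0mem : ∀ σ : Fin N → Bool, (0 : ℝ) ∈ {t : ℝ | ∃ u v : H, ‖u‖ ≤ 1 ∧ ‖v‖ ≤ 1 ∧
      t = |(N : ℝ)⁻¹ * ∑ k : Fin N, (if σ k then (1 : ℝ) else -1) *
            ((@inner ℝ _ _ u (φ k)) * (@inner ℝ _ _ v (φ k)))|} := by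
    intro σ
    exact ⟨0, 0, by simp, by simp, by simp⟩
  have hnnA : ∀ σ, (0 : ℝ) ≤ A σ := fun σ => (hkey σ).1
  have hcnn : ∀ σ, (0 : ℝ) ≤ (N : ℝ)⁻¹ * Real.sqrt (A σ) := by
    intro σ; positivity
  have hsup_le : ∀ σ : Fin N → Bool, sSup {t : ℝ | ∃ u v : H, ‖u‖ ≤ 1 ∧ ‖v‖ ≤ 1 ∧
      t = |(N : ℝ)⁻¹ * ∑ k : Fin N, (if σ k then (1 : ℝ) else -1) *
            ((@inner ℝ _ _ u (φ k)) * (@inner ℝ _ _ v (φ k)))|}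
      ≤ (N : ℝ)⁻¹ * Real.sqrt (A σ) := fun σ => Real.sSup_le (hub σ) (hcnn σ)
  have hsup_nn : ∀ σ : Fin N → Bool, (0 : ℝ) ≤ sSup {t : ℝ | ∃ u v : H, ‖u‖ ≤ 1 ∧ ‖v‖ ≤ 1 ∧
      t = |(N : ℝ)⁻¹ * ∑ k : Fin N, (if σ k then (1 : ℝ) else -1) *
            ((@inner ℝ _ _ u (φ k)) * (@inner ℝ _ _ v (φ k)))|} := by
    intro σ
    exact le_csSup ⟨(N : ℝ)⁻¹ * Real.sqrt (A σ), fun t ht => hub σ t ht⟩ (h0mem σ)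
  have h2N : (0 : ℝ) < (2 : ℝ) ^ N := by positivity
  constructor
  · exact mul_nonneg (by positivity) (Finset.sum_nonneg fun σ _ => hsup_nn σ)
  -- sum of A over σ
  have hAsum : ∑ σ : Fin N → Bool, A σ ≤ (2 : ℝ) ^ N * ((N : ℝ) * κ ^ 4) := by
    have hswap : ∑ σ : Fin N → Bool, A σ
        = ∑ k, ∑ l, (∑ σ : Fin N → Bool, ε σ k * ε σ l) * (⟪φ k, φ l⟫ : ℝ) ^ 2 := by
      rw [Finset.sum_comm]
      refine Finset.sum_congr rfl fun k _ => ?_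
      rw [Finset.sum_comm]
      refine Finset.sum_congr rfl fun l _ => ?_
      rw [Finset.sum_mul]
    rw [hswap]
    have hsign : ∀ k l : Fin N, (∑ σ : Fin N → Bool, ε σ k * ε σ l)
        = if k = l then (2 : ℝ) ^ N else 0 := fun k l => sum_sign_mul_sign k l
    have : ∑ k, ∑ l, (∑ σ : Fin N → Bool, ε σ k * ε σ l) * (⟪φ k, φ l⟫ : ℝ) ^ 2
        = ∑ k : Fin N, (2 : ℝ) ^ N * (⟪φ k, φ k⟫ : ℝ) ^ 2 := by
      refine Finset.sum_congr rfl fun k _ => ?_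
      simp only [hsign]
      rw [Finset.sum_eq_single k]
      · simp
      · intro l _ hl; rw [if_neg (Ne.symm hl), zero_mul]
      · intro hk; exact absurd (Finset.mem_univ k) hk
    rw [this]
    have hbd : ∀ k : Fin N, (⟪φ k, φ k⟫ : ℝ) ^ 2 ≤ κ ^ 4 := by
      intro k
      have h1 : (⟪φ k, φ k⟫ : ℝ) = ‖φ k‖ ^ 2 := real_inner_self_eq_norm_sq (φ k)
      have h2 : ‖φ k‖ ^ 2 ≤ κ ^ 2 := by nlinarith [norm_nonneg (φ k), hφ k]
      rw [h1]
      nlinarith [sq_nonneg (‖φ k‖), norm_nonneg (φ k)]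
    calc ∑ k : Fin N, (2 : ℝ) ^ N * (⟪φ k, φ k⟫ : ℝ) ^ 2
        ≤ ∑ k : Fin N, (2 : ℝ) ^ N * κ ^ 4 :=
          Finset.sum_le_sum fun k _ => mul_le_mul_of_nonneg_left (hbd k) h2N.le
      _ = (2 : ℝ) ^ N * ((N : ℝ) * κ ^ 4) := by
          rw [Finset.sum_const, Finset.card_univ, Fintype.card_fin]; ring
  -- Cauchy-Schwarz over σ
  have hCS : ∑ σ : Fin N → Bool, Real.sqrt (A σ) ≤ (2 : ℝ) ^ N * (Real.sqrt N * κ ^ 2) := by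
    have h1 := Finset.sum_mul_sq_le_sq_mul_sq Finset.univ (fun _ : Fin N → Bool => (1 : ℝ))
      (fun σ => Real.sqrt (A σ))
    simp only [one_mul, one_pow, Finset.sum_const, Finset.card_univ, Fintype.card_fun,
      Fintype.card_bool, Fintype.card_fin, nsmul_eq_mul, mul_one] at h1
    have h2 : ∀ σ : Fin N → Bool, Real.sqrt (A σ) ^ 2 = A σ := fun σ => Real.sq_sqrt (hnnA σ)
    rw [Finset.sum_congr rfl fun σ _ => h2 σ] at h1
    have h3 : (∑ σ : Fin N → Bool, Real.sqrt (A σ)) ^ 2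
        ≤ ((2 : ℝ) ^ N * (Real.sqrt N * κ ^ 2)) ^ 2 := by
      have hsq : (Real.sqrt N) ^ 2 = (N : ℝ) := Real.sq_sqrt (Nat.cast_nonneg N)
      calc (∑ σ : Fin N → Bool, Real.sqrt (A σ)) ^ 2
          ≤ (2 : ℝ) ^ N * ∑ σ : Fin N → Bool, A σ := by exact_mod_cast h1
        _ ≤ (2 : ℝ) ^ N * ((2 : ℝ) ^ N * ((N : ℝ) * κ ^ 4)) :=
            mul_le_mul_of_nonneg_left hAsum h2N.le
        _ = ((2 : ℝ) ^ N * (Real.sqrt N * κ ^ 2)) ^ 2 := by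
            rw [mul_pow, mul_pow, hsq]; ring
    have hL : (0 : ℝ) ≤ ∑ σ : Fin N → Bool, Real.sqrt (A σ) :=
      Finset.sum_nonneg fun σ _ => Real.sqrt_nonneg _
    have hR : (0 : ℝ) ≤ (2 : ℝ) ^ N * (Real.sqrt N * κ ^ 2) := by positivity
    nlinarith [h3, hL, hR]
  -- put together
  have hstep : ((2 : ℝ) ^ N)⁻¹ *
      ∑ σ : Fin N → Bool, sSup {t : ℝ | ∃ u v : H, ‖u‖ ≤ 1 ∧ ‖v‖ ≤ 1 ∧
        t = |(N : ℝ)⁻¹ * ∑ k : Fin N, (if σ k then (1 : ℝ) else -1) *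
              ((@inner ℝ _ _ u (φ k)) * (@inner ℝ _ _ v (φ k)))|}
      ≤ ((2 : ℝ) ^ N)⁻¹ * ((N : ℝ)⁻¹ * ((2 : ℝ) ^ N * (Real.sqrt N * κ ^ 2))) := by
    refine mul_le_mul_of_nonneg_left ?_ (by positivity)
    calc ∑ σ : Fin N → Bool, sSup _ ≤ ∑ σ : Fin N → Bool, (N : ℝ)⁻¹ * Real.sqrt (A σ) :=
          Finset.sum_le_sum fun σ _ => hsup_le σ
      _ = (N : ℝ)⁻¹ * ∑ σ : Fin N → Bool, Real.sqrt (A σ) := by rw [Finset.mul_sum]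
      _ ≤ (N : ℝ)⁻¹ * ((2 : ℝ) ^ N * (Real.sqrt N * κ ^ 2)) :=
          mul_le_mul_of_nonneg_left hCS hNinv
  refine hstep.trans (le_of_eq ?_)
  have hNpos : (0 : ℝ) < (N : ℝ) := by exact_mod_cast hN
  have hsq : Real.sqrt N * Real.sqrt N = (N : ℝ) := Real.mul_self_sqrt hNpos.le
  have hsn : (0 : ℝ) < Real.sqrt N := Real.sqrt_pos.2 hNpos
  field_simp
  nlinarith [hsq, hsn, sq_nonneg κ]

/-- the Rademacher complexity of the product class
`F₂ = { x ↦ ⟨u, Ψ x⟩⟨v, Ψ x⟩ : ‖u‖ ≤ 1, ‖v‖ ≤ 1 }` over `N` i.i.d. samples is at most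
`κ²/√N`, where `Ψ` is the feature map of the RKHS `H_Γ` and `K_X(x,x) = ‖Ψ x‖² ≤ κ²`. -/
theorem rademacher_complexity_product_class_le
    {X H : Type*} [MeasurableSpace X]
    [NormedAddCommGroup H] [InnerProductSpace ℝ H]
    (PX : Measure X) [IsProbabilityMeasure PX]
    (Ψ : X → H) (κ : ℝ) (N : ℕ) (hN : 0 < N)
    (hκ : 0 ≤ κ) (hΨ : ∀ x, ‖Ψ x‖ ≤ κ) :
    (∫ xs : Fin N → X,
        ((2 : ℝ) ^ N)⁻¹ *
          ∑ σ : Fin N → Bool,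
            sSup {t : ℝ | ∃ u v : H, ‖u‖ ≤ 1 ∧ ‖v‖ ≤ 1 ∧
              t = |(N : ℝ)⁻¹ * ∑ k : Fin N,
                    (if σ k then (1 : ℝ) else -1) *
                      ((@inner ℝ _ _ u (Ψ (xs k))) * (@inner ℝ _ _ v (Ψ (xs k))))|}
        ∂(Measure.pi fun _ : Fin N => PX))
      ≤ κ ^ 2 / Real.sqrt N := by
  have hC : (0 : ℝ) ≤ κ ^ 2 / Real.sqrt N := by positivity
  have hpt := fun xs : Fin N → X =>
    per_sample hN κ hκ (fun k => Ψ (xs k)) (fun k => hΨ (xs k))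
  calc (∫ xs : Fin N → X, ((2 : ℝ) ^ N)⁻¹ *
          ∑ σ : Fin N → Bool,
            sSup {t : ℝ | ∃ u v : H, ‖u‖ ≤ 1 ∧ ‖v‖ ≤ 1 ∧
              t = |(N : ℝ)⁻¹ * ∑ k : Fin N,
                    (if σ k then (1 : ℝ) else -1) *
                      ((@inner ℝ _ _ u (Ψ (xs k))) * (@inner ℝ _ _ v (Ψ (xs k))))|}
        ∂(Measure.pi fun _ : Fin N => PX))
      ≤ |∫ xs : Fin N → X, ((2 : ℝ) ^ N)⁻¹ *
          ∑ σ : Fin N → Bool,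
            sSup {t : ℝ | ∃ u v : H, ‖u‖ ≤ 1 ∧ ‖v‖ ≤ 1 ∧
              t = |(N : ℝ)⁻¹ * ∑ k : Fin N,
                    (if σ k then (1 : ℝ) else -1) *
                      ((@inner ℝ _ _ u (Ψ (xs k))) * (@inner ℝ _ _ v (Ψ (xs k))))|}
        ∂(Measure.pi fun _ : Fin N => PX)| := le_abs_self _
    _ ≤ κ ^ 2 / Real.sqrt N := by
        rw [← Real.norm_eq_abs]
        have := norm_integral_le_of_norm_le_const
          (μ := Measure.pi fun _ : Fin N => PX) (C := κ ^ 2 / Real.sqrt N)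
          (ae_of_all _ fun xs => by
            rw [Real.norm_eq_abs, abs_of_nonneg (hpt xs).1]
            exact (hpt xs).2)
        simpa [measure_univ] using this
end

section
/- Let g* = g₀ + β g₁ with g₀ ⟂ g₁, ‖g₁‖ = 1, ‖g₀‖² = α², and suppose: (a) ‖Γ* g₀‖² ≤ α², (b) ‖Γ* g₁‖² ≤ τ² with τ < 1, (c) α² + β² ≤ B²/(1−ε), and (d) the isometry lower bound (1−ε)(α²+β²) ≤ ‖Γ*(g₀+βg₁)‖². Then β² τ² ≤ (τ²/(1−τ²)) · ((τ+ε)/(1−ε)) · B². -/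
set_option maxHeartbeats 1000000 in
/-- the algebraic core of the approximation-error bound (Lemma 3.3).
With `g* = g₀ + β g₁`, `g₀ ⟂ g₁`, `‖g₁‖ = 1`, `α = ‖g₀‖`, a linear map `T = Γ*` with
`‖T g₀‖² ≤ α²`, `‖T g₁‖² ≤ τ²` (`τ < 1`), `α² + β² ≤ B²/(1−ε)` and the isometry lower
bound `(1−ε)(α²+β²) ≤ ‖T(g₀+βg₁)‖²`, one gets
`β² τ² ≤ (τ²/(1−τ²)) ((τ+ε)/(1−ε)) B²`. -/
theorem approximation_error_core
    {H₂ H₁ : Type*}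
    [NormedAddCommGroup H₂] [InnerProductSpace ℝ H₂]
    [NormedAddCommGroup H₁] [InnerProductSpace ℝ H₁]
    (T : H₂ →ₗ[ℝ] H₁) (g₀ g₁ : H₂) (β τ ε B : ℝ)
    (horth : @inner ℝ _ _ g₀ g₁ = 0) (hg₁ : ‖g₁‖ = 1)
    (hβ : 0 ≤ β) (hτ0 : 0 ≤ τ) (hτ1 : τ < 1)
    (hε : 0 < ε ∧ ε < 1) (hB : 0 < B)
    (ha : ‖T g₀‖ ^ 2 ≤ ‖g₀‖ ^ 2)
    (hb : ‖T g₁‖ ^ 2 ≤ τ ^ 2)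
    (hc : ‖g₀‖ ^ 2 + β ^ 2 ≤ B ^ 2 / (1 - ε))
    (hd : (1 - ε) * (‖g₀‖ ^ 2 + β ^ 2) ≤ ‖T (g₀ + β • g₁)‖ ^ 2) :
    β ^ 2 * τ ^ 2 ≤ (τ ^ 2 / (1 - τ ^ 2)) * ((τ + ε) / (1 - ε)) * B ^ 2 := by
  obtain ⟨hε0, hε1⟩ := hε
  set α := ‖g₀‖ with hα
  have hα0 : 0 ≤ α := norm_nonneg _
  have ha' : ‖T g₀‖ ≤ α := by nlinarith [norm_nonneg (T g₀)]
  have hb' : ‖T g₁‖ ≤ τ := by nlinarith [norm_nonneg (T g₁)]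
  have htri : ‖T (g₀ + β • g₁)‖ ≤ α + β * τ := by
    have : ‖T (g₀ + β • g₁)‖ ≤ ‖T g₀‖ + ‖T (β • g₁)‖ := by
      rw [map_add]; exact norm_add_le _ _
    have h2 : ‖T (β • g₁)‖ = β * ‖T g₁‖ := by
      rw [map_smul, norm_smul, Real.norm_of_nonneg hβ]
    nlinarith [norm_nonneg (T g₁), mul_le_mul_of_nonneg_left hb' hβ]
  have hsq : ‖T (g₀ + β • g₁)‖ ^ 2 ≤ (α + β * τ) ^ 2 := by
    apply sq_le_sq' _ htri
    nlinarith [norm_nonneg (T (g₀ + β • g₁)), mul_nonneg hβ hτ0]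
  -- (1-τ²) β² ≤ (ε+τ)(α²+β²)
  have key : (1 - τ ^ 2) * β ^ 2 ≤ (ε + τ) * (α ^ 2 + β ^ 2) := by
    nlinarith [sq_nonneg (α - β), sq_nonneg (α - β * τ)]
  have hsum : α ^ 2 + β ^ 2 ≤ B ^ 2 / (1 - ε) := hc
  have hτ2 : 0 < 1 - τ ^ 2 := by nlinarith
  have h1ε : 0 < 1 - ε := by linarith
  have key2 : (1 - τ ^ 2) * β ^ 2 ≤ (ε + τ) * (B ^ 2 / (1 - ε)) := by
    have : (ε + τ) * (α ^ 2 + β ^ 2) ≤ (ε + τ) * (B ^ 2 / (1 - ε)) :=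
      mul_le_mul_of_nonneg_left hsum (by linarith)
    linarith
  have key3 : (1 - τ ^ 2) * β ^ 2 ≤ (τ + ε) / (1 - ε) * B ^ 2 := by
    have : (ε + τ) * (B ^ 2 / (1 - ε)) = (τ + ε) / (1 - ε) * B ^ 2 := by ring
    linarith
  rw [div_mul_eq_mul_div, div_mul_eq_mul_div, le_div_iff₀ hτ2]
  have h := mul_le_mul_of_nonneg_left key3 (sq_nonneg τ)
  ring_nf at h ⊢
  linarith
end

section
/- Let ψ₁ ≡ 1 be the top eigenfunction of Γ*Γ with eigenvalue λ₁ = 1, and suppose Ψ̂ is any d-dimensional encoder. If the top-(d+1) eigenvalues satisfy λ_{d+1}/(1−λ_{d+1}) · ε/(1−ε) ≤ 1/2, then the worst-case approximation error over F_B(Γ;ε) satisfies sup_{f ∈ F_B(Γ;ε)} min_{w ∈ ℝ^d} ‖w^T Ψ̂ − f‖²_{P_X} ≥ (λ_{d+1}/(1−λ_{d+1})) · (ε/(1−ε)) · B², and equality holds when Ψ̂ spans the top-d eigenspace span{ψ₁,…,ψ_d}. -/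
set_option maxHeartbeats 1000000 in
/-- Proposition 4.1, lower bound and sufficiency: for any `d`-dimensional
encoder `Ψ̂`, the worst-case approximation error over
`F_B(Γ;ε) = { f : ∑ u_i² ≤ B², ∑ ((1−ε−λ_i)/λ_i) u_i² ≤ 0 }` (where `u_i = ⟨f, ψ_i⟩` in
the orthonormal eigenbasis `ψ` of `Γ*Γ`, `λ₁ = lam 0 = 1`) is at least
`(λ_{d+1}/(1−λ_{d+1})) (ε/(1−ε)) B²`, provided this quantity is at most `1/2`·(scale);
equality holds when `Ψ̂` spans the top-`d` eigenspace. (0-indexed: `λ_{d+1} = lam d`.) -/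
theorem worst_case_approximation_error_lower_bound
    {H : Type*} [NormedAddCommGroup H] [InnerProductSpace ℝ H] [CompleteSpace H]
    (ψ : ℕ → H) (lam : ℕ → ℝ) (d : ℕ) (ε B : ℝ) (Ψhat : Fin d → H)
    (hON : Orthonormal ℝ ψ)
    (hbasis : (Submodule.span ℝ (Set.range ψ)).topologicalClosure = ⊤)
    (hlam1 : lam 0 = 1) (hmono : Antitone lam) (hpos : ∀ i, 0 < lam i)
    (hlamd : lam d < 1)
    (hε : 0 < ε ∧ ε < 1) (hB : 0 < B)
    (hhalf : (lam d / (1 - lam d)) * (ε / (1 - ε)) ≤ 1 / 2) :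
    letI F : Set H := {f : H |
      Summable (fun i => ((1 - ε - lam i) / lam i) * (@inner ℝ _ _ f (ψ i)) ^ 2) ∧
      (∑' i, (@inner ℝ _ _ f (ψ i)) ^ 2) ≤ B ^ 2 ∧
      (∑' i, ((1 - ε - lam i) / lam i) * (@inner ℝ _ _ f (ψ i)) ^ 2) ≤ 0}
    letI errSup : ℝ := sSup {e : ℝ | ∃ f ∈ F,
      e = sInf {t : ℝ | ∃ w : Fin d → ℝ, t = ‖(∑ i, w i • Ψhat i) - f‖ ^ 2}}
    (lam d / (1 - lam d)) * (ε / (1 - ε)) * B ^ 2 ≤ errSup ∧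
      (Submodule.span ℝ (Set.range Ψhat) = Submodule.span ℝ (ψ '' Set.Iio d) →
        errSup = (lam d / (1 - lam d)) * (ε / (1 - ε)) * B ^ 2) := by
  classical
  obtain ⟨hε0, hε1⟩ := hε
  set F : Set H := {f : H |
      Summable (fun i => ((1 - ε - lam i) / lam i) * (@inner ℝ _ _ f (ψ i)) ^ 2) ∧
      (∑' i, (@inner ℝ _ _ f (ψ i)) ^ 2) ≤ B ^ 2 ∧
      (∑' i, ((1 - ε - lam i) / lam i) * (@inner ℝ _ _ f (ψ i)) ^ 2) ≤ 0} with hFdef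
  set errSup : ℝ := sSup {e : ℝ | ∃ f ∈ F,
      e = sInf {s : ℝ | ∃ w : Fin d → ℝ, s = ‖(∑ i, w i • Ψhat i) - f‖ ^ 2}} with hEdef
  -- basic positivity facts
  have h1e : (0:ℝ) < 1 - ε := by linarith
  have hld : (0:ℝ) < lam d := hpos d
  have h1ld : (0:ℝ) < 1 - lam d := by linarith
  have hlamle1 : ∀ i, lam i ≤ 1 := fun i => hlam1 ▸ hmono (Nat.zero_le i)
  -- the "eigen-constraint" coefficients
  set Q : ℕ → ℝ := fun i => (1 - ε - lam i) / lam i with hQdef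
  have hQmono : ∀ i j : ℕ, i ≤ j → Q i ≤ Q j := by
    intro i j hij
    have h1 := hpos i; have h2 := hpos j
    have hl : lam j ≤ lam i := hmono hij
    simp only [hQdef]
    rw [div_le_div_iff₀ h1 h2]
    nlinarith
  have hQ0 : Q 0 = -ε := by
    simp only [hQdef, hlam1]
    ring
  set K : ℝ := Q d with hKdef
  set t : ℝ := lam d / (1 - lam d) * (ε / (1 - ε)) with htdef
  have ht_pos : 0 < t := mul_pos (div_pos hld h1ld) (div_pos hε0 h1e)
  have ht_half : t ≤ 1/2 := hhalf
  have ht1 : t ≤ 1 := by linarith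
  have htKε : (K + ε) * t = ε := by
    simp only [hKdef, hQdef, htdef]
    field_simp
    ring
  have htK : K * t = ε * (1 - t) := by linear_combination htKε
  have hKε_pos : 0 < K + ε := by
    have hKεlam : (K + ε) * lam d = (1 - ε) * (1 - lam d) := by
      simp only [hKdef, hQdef]
      field_simp
      ring
    nlinarith
  -- Hilbert basis and Parseval
  have hb' : ⊤ ≤ (Submodule.span ℝ (Set.range ψ)).topologicalClosure := le_of_eq hbasis.symm
  set b : HilbertBasis ℕ ℝ H := HilbertBasis.mk hON hb' with hbdef
  have hbψ : ∀ i, (b i : H) = ψ i := fun i => congrFun (HilbertBasis.coe_mk hON hb') i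
  have hsq : ∀ (f : H) (i : ℕ), (inner ℝ f (b i) : ℝ) * inner ℝ (b i) f = (inner ℝ f (ψ i) : ℝ)^2 := by
    intro f i
    rw [real_inner_comm f (b i), hbψ]
    ring
  have hParseval : ∀ f : H, ∑' i, (inner ℝ f (ψ i) : ℝ)^2 = ‖f‖^2 := by
    intro f
    have h := b.tsum_inner_mul_inner f f
    simp_rw [hsq f] at h
    rw [h, real_inner_self_eq_norm_sq]
  have hsummable : ∀ f : H, Summable (fun i => (inner ℝ f (ψ i) : ℝ)^2) := by
    intro f
    have h := b.summable_inner_mul_inner f f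
    simp_rw [hsq f] at h
    exact h
  -- inner ℝ products with finite sums in the basis
  have hinner_sum : ∀ (n : ℕ) (cf : Fin n → ℝ) (j : ℕ),
      (inner ℝ (∑ i : Fin n, cf i • ψ (i : ℕ)) (ψ j) : ℝ) = if h : j < n then cf ⟨j, h⟩ else 0 := by
    intro n cf j
    rw [sum_inner]
    have hterm : ∀ i : Fin n, (inner ℝ (cf i • ψ (i:ℕ)) (ψ j) : ℝ) = if (i:ℕ) = j then cf i else 0 := by
      intro i
      rw [real_inner_smul_left, orthonormal_iff_ite.mp hON]
      split_ifs <;> simp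
    rw [Finset.sum_congr rfl fun i _ => hterm i]
    by_cases h : j < n
    · rw [dif_pos h, Finset.sum_eq_single (⟨j, h⟩ : Fin n)]
      · simp
      · intro i _ hi
        rw [if_neg]
        intro hij; exact hi (Fin.ext hij)
      · simp
    · rw [dif_neg h, Finset.sum_eq_zero]
      intro i _
      rw [if_neg]
      intro hij; exact h (hij ▸ i.isLt)
  -- boundedness below of the inner-inf sets
  have hbddBelow : ∀ g : H, BddBelow {s : ℝ | ∃ w : Fin d → ℝ, s = ‖(∑ i, w i • Ψhat i) - g‖ ^ 2} := by
    intro g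
    refine ⟨0, ?_⟩
    rintro s ⟨w, rfl⟩
    positivity
  ------------------------------------------------------------------
  -- PART A : the lower bound
  ------------------------------------------------------------------
  -- a nonzero coefficient vector orthogonal to all the Ψhat constraints
  have hexa : ∃ a : Fin (d+1) → ℝ, a ≠ 0 ∧
      ∀ j : Fin d, ∑ i : Fin (d+1), a i * (inner ℝ (Ψhat j) (ψ (i:ℕ)) : ℝ) = 0 := by
    set M : Matrix (Fin d) (Fin (d+1)) ℝ := Matrix.of (fun j i => (inner ℝ (Ψhat j) (ψ (i:ℕ)) : ℝ)) with hM
    have hne : ¬ Function.Injective M.mulVecLin := by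
      intro hinj
      have h := LinearMap.finrank_le_finrank_of_injective hinj
      rw [Module.finrank_fin_fun, Module.finrank_fin_fun] at h
      omega
    rw [← LinearMap.ker_eq_bot] at hne
    obtain ⟨a, ha_mem, ha0⟩ := Submodule.exists_mem_ne_zero_of_ne_bot hne
    refine ⟨a, ha0, fun j => ?_⟩
    have h := congrFun (LinearMap.mem_ker.mp ha_mem) j
    rw [Matrix.mulVecLin_apply] at h
    simpa [Matrix.mulVec, dotProduct, hM, mul_comm] using h
  obtain ⟨a, ha0, haorth⟩ := hexa
  have hna_pos : 0 < ∑ i, a i ^ 2 := by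
    have hex : ∃ i, a i ≠ 0 := by
      by_contra hcon; push_neg at hcon; exact ha0 (funext hcon)
    obtain ⟨i0, hi0⟩ := hex
    exact Finset.sum_pos' (fun i _ => sq_nonneg (a i))
      ⟨i0, Finset.mem_univ _, by positivity⟩
  set na : ℝ := Real.sqrt (∑ i, a i ^ 2) with hna_def
  have hna : 0 < na := Real.sqrt_pos.mpr hna_pos
  set α : Fin (d+1) → ℝ := fun i => a i / na with hα_def
  have hα1 : ∑ i, α i ^ 2 = 1 := by
    simp only [hα_def, div_pow]
    rw [← Finset.sum_div, hna_def, Real.sq_sqrt hna_pos.le]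
    exact div_self hna_pos.ne'
  have hαorth : ∀ j : Fin d, ∑ i : Fin (d+1), α i * (inner ℝ (Ψhat j) (ψ (i:ℕ)) : ℝ) = 0 := by
    intro j
    simp only [hα_def, div_mul_eq_mul_div, ← Finset.sum_div, haorth j, zero_div]
  set v : H := ∑ i : Fin (d+1), α i • ψ (i:ℕ) with hv_def
  have hvψ : ∀ j : ℕ, (inner ℝ v (ψ j) : ℝ) = if h : j < d+1 then α ⟨j,h⟩ else 0 :=
    hinner_sum _ α
  have hvv : (inner ℝ v v : ℝ) = 1 := by
    rw [hv_def, sum_inner]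
    have hterm : ∀ i : Fin (d+1), (inner ℝ (α i • ψ (i:ℕ)) v : ℝ) = α i ^ 2 := by
      intro i
      rw [real_inner_smul_left, real_inner_comm v (ψ (i:ℕ)), hvψ, dif_pos i.isLt, Fin.eta]
      ring
    rw [Finset.sum_congr rfl fun i _ => hterm i, hα1]
  have hvnorm : ‖v‖ = 1 := by
    have h2 : ‖v‖^2 = 1 := by rw [← real_inner_self_eq_norm_sq, hvv]
    nlinarith only [norm_nonneg v, h2]
  have hΨv : ∀ j : Fin d, (inner ℝ (Ψhat j) v : ℝ) = 0 := by
    intro j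
    rw [hv_def, inner_sum]
    simp_rw [real_inner_smul_right]
    exact hαorth j
  have hxv : ∀ w : Fin d → ℝ, (inner ℝ (∑ i, w i • Ψhat i) v : ℝ) = 0 := by
    intro w
    rw [sum_inner]
    simp_rw [real_inner_smul_left, hΨv, mul_zero]
    simp
  -- the extremal function
  set A0 : ℝ := α 0 with hA0
  set S1 : ℝ := ∑ i ∈ Finset.univ.erase (0 : Fin (d+1)), α i ^ 2 with hS1def
  have hsplit : A0^2 + S1 = 1 := by
    rw [hA0, hS1def]
    exact (Finset.add_sum_erase _ _ (Finset.mem_univ 0)).trans hα1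
  have hS1nn : 0 ≤ S1 := Finset.sum_nonneg fun i _ => sq_nonneg _
  set σ : ℝ := if 0 ≤ A0 then 1 else -1 with hσdef
  have hσA0 : σ * A0 = |A0| := by
    rw [hσdef]; split_ifs with h
    · rw [one_mul, abs_of_nonneg h]
    · rw [abs_of_neg (lt_of_not_ge h)]; ring
  have hσsq : σ^2 = 1 := by rw [hσdef]; split_ifs <;> norm_num
  set rt : ℝ := Real.sqrt t with hrt
  set rt' : ℝ := Real.sqrt (1 - t) with hrt'
  have hrtsq : rt^2 = t := Real.sq_sqrt ht_pos.le
  have hrt'sq : rt'^2 = 1 - t := Real.sq_sqrt (by linarith)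
  have hrtle : rt ≤ rt' := Real.sqrt_le_sqrt (by linarith)
  have hrtpos : 0 < rt := Real.sqrt_pos.mpr ht_pos
  set cf : Fin (d+1) → ℝ := fun i => if i = 0 then B * rt' * σ else B * rt * α i / Real.sqrt S1
    with hcf
  have hcf0 : cf 0 = B * rt' * σ := by simp [hcf]
  have hcfi : ∀ i : Fin (d+1), i ≠ 0 → cf i = B * rt * α i / Real.sqrt S1 := by
    intro i hi; simp [hcf, hi]
  set f0 : H := ∑ i : Fin (d+1), cf i • ψ (i:ℕ) with hf0
  have hu : ∀ j : ℕ, (inner ℝ f0 (ψ j) : ℝ) = if h : j < d+1 then cf ⟨j,h⟩ else 0 :=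
    hinner_sum _ cf
  have hcf0sq : cf 0 ^ 2 = B^2*(1-t) := by
    rw [hcf0, mul_pow, mul_pow, hσsq, hrt'sq]
    ring
  have htail0 : 0 ≤ ∑ i ∈ Finset.univ.erase (0 : Fin (d+1)), cf i ^ 2 :=
    Finset.sum_nonneg fun i _ => sq_nonneg _
  have htail : ∑ i ∈ Finset.univ.erase (0 : Fin (d+1)), cf i ^ 2 ≤ B^2 * t := by
    by_cases hS1 : S1 = 0
    · have hz : ∀ i ∈ Finset.univ.erase (0 : Fin (d+1)), α i = 0 := by
        intro i hi
        have h := (Finset.sum_eq_zero_iff_of_nonneg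
          (fun i _ => sq_nonneg (α i))).mp (hS1def ▸ hS1) i hi
        exact (pow_eq_zero_iff two_ne_zero).mp h
      have hz2 : ∑ i ∈ Finset.univ.erase (0 : Fin (d+1)), cf i ^ 2 = 0 := by
        apply Finset.sum_eq_zero
        intro i hi
        rw [hcfi i (Finset.ne_of_mem_erase hi), hz i hi]
        simp
      rw [hz2]; positivity
    · have hS1pos : 0 < S1 := lt_of_le_of_ne hS1nn (Ne.symm hS1)
      have hterm : ∀ i ∈ Finset.univ.erase (0 : Fin (d+1)),
          cf i ^ 2 = B^2*t/S1 * α i ^ 2 := by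
        intro i hi
        rw [hcfi i (Finset.ne_of_mem_erase hi)]
        rw [div_pow, mul_pow, mul_pow, hrtsq, Real.sq_sqrt hS1nn]
        ring
      rw [Finset.sum_congr rfl hterm, ← Finset.mul_sum, ← hS1def]
      exact le_of_eq (div_mul_cancel₀ _ hS1)
  have hsumcf : ∑ i : Fin (d+1), cf i ^ 2 ≤ B ^ 2 := by
    rw [← Finset.add_sum_erase _ _ (Finset.mem_univ (0 : Fin (d+1))), hcf0sq]
    linarith only [htail]
  have hQsum : ∑ i : Fin (d+1), Q (i:ℕ) * cf i ^ 2 ≤ 0 := by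
    have hbound : ∑ i ∈ Finset.univ.erase (0 : Fin (d+1)), Q (i:ℕ) * cf i ^ 2
        ≤ K * ∑ i ∈ Finset.univ.erase (0 : Fin (d+1)), cf i ^ 2 := by
      rw [Finset.mul_sum]
      apply Finset.sum_le_sum
      intro i _
      exact mul_le_mul_of_nonneg_right
        (hKdef ▸ hQmono (i:ℕ) d (Nat.lt_succ_iff.mp i.isLt)) (sq_nonneg _)
    rw [← Finset.add_sum_erase _ _ (Finset.mem_univ (0 : Fin (d+1)))]
    have h0 : Q ((0 : Fin (d+1)) : ℕ) * cf 0 ^ 2 = -ε * (B^2*(1-t)) := by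
      rw [show ((0 : Fin (d+1)) : ℕ) = 0 from rfl, hQ0, hcf0sq]
    rw [h0]
    rcases le_or_gt 0 K with hK | hK
    · have h1 : K * ∑ i ∈ Finset.univ.erase (0 : Fin (d+1)), cf i ^ 2 ≤ K * (B^2*t) :=
        mul_le_mul_of_nonneg_left htail hK
      have h2 : K*(B^2*t) = ε*(B^2*(1-t)) := by
        rw [show K*(B^2*t) = K*t*B^2 by ring, htK]; ring
      linarith only [hbound, h1, h2]
    · have h1 : K * ∑ i ∈ Finset.univ.erase (0 : Fin (d+1)), cf i ^ 2 ≤ 0 :=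
        mul_nonpos_of_nonpos_of_nonneg hK.le htail0
      have h2 : 0 ≤ ε*(B^2*(1-t)) :=
        mul_nonneg hε0.le (mul_nonneg (sq_nonneg B) (by linarith only [ht1]))
      linarith only [hbound, h1, h2]
  -- f0 belongs to F
  have hmemF : f0 ∈ F := by
    refine ⟨?_, ?_, ?_⟩
    · apply summable_of_ne_finset_zero (s := Finset.range (d+1))
      intro j hj
      rw [hu j, dif_neg (by simpa using hj)]
      simp
    · rw [tsum_eq_sum (s := Finset.range (d+1))
        (fun j hj => by rw [hu j, dif_neg (by simpa using hj)]; simp)]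
      rw [Finset.sum_range (fun j => (inner ℝ f0 (ψ j) : ℝ)^2)]
      calc ∑ i : Fin (d+1), (inner ℝ f0 (ψ (i:ℕ)) : ℝ)^2
          = ∑ i : Fin (d+1), cf i ^ 2 := by
            apply Finset.sum_congr rfl
            intro i _
            rw [hu (i:ℕ), dif_pos i.isLt, Fin.eta]
        _ ≤ B^2 := hsumcf
    · rw [tsum_eq_sum (s := Finset.range (d+1))
        (fun j hj => by rw [hu j, dif_neg (by simpa using hj)]; simp)]
      rw [Finset.sum_range (fun j => Q j * (inner ℝ f0 (ψ j) : ℝ)^2)]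
      calc ∑ i : Fin (d+1), Q (i:ℕ) * (inner ℝ f0 (ψ (i:ℕ)) : ℝ)^2
          = ∑ i : Fin (d+1), Q (i:ℕ) * cf i ^ 2 := by
            apply Finset.sum_congr rfl
            intro i _
            rw [hu (i:ℕ), dif_pos i.isLt, Fin.eta]
        _ ≤ 0 := hQsum
  -- ⟪f0, v⟫ is large
  have hfv : B * rt ≤ (inner ℝ f0 v : ℝ) := by
    have h1 : (inner ℝ f0 v : ℝ) = B*rt'*|A0| + B*rt*Real.sqrt S1 := by
      rw [hf0, sum_inner]
      have hterm : ∀ i : Fin (d+1), (inner ℝ (cf i • ψ (i:ℕ)) v : ℝ) = cf i * α i := by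
        intro i
        rw [real_inner_smul_left, real_inner_comm v (ψ (i:ℕ)), hvψ, dif_pos i.isLt, Fin.eta]
      rw [Finset.sum_congr rfl fun i _ => hterm i,
        ← Finset.add_sum_erase _ _ (Finset.mem_univ (0 : Fin (d+1)))]
      have h0 : cf 0 * α 0 = B*rt'*|A0| := by
        rw [hcf0, ← hA0, mul_assoc, hσA0]
      have htl : ∑ i ∈ Finset.univ.erase (0 : Fin (d+1)), cf i * α i
          = B*rt*Real.sqrt S1 := by
        have hterm2 : ∀ i ∈ Finset.univ.erase (0 : Fin (d+1)),
            cf i * α i = B*rt/Real.sqrt S1 * α i ^ 2 := by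
          intro i hi
          rw [hcfi i (Finset.ne_of_mem_erase hi)]
          ring
        rw [Finset.sum_congr rfl hterm2, ← Finset.mul_sum, ← hS1def]
        rw [div_mul_eq_mul_div, mul_div_assoc, Real.div_sqrt]
      rw [h0, htl]
    have h3 : 1 ≤ |A0| + Real.sqrt S1 := by
      nlinarith only [abs_nonneg A0, Real.sqrt_nonneg S1, Real.sq_sqrt hS1nn, sq_abs A0, hsplit]
    have h4 : B*rt*|A0| ≤ B*rt'*|A0| :=
      mul_le_mul_of_nonneg_right (mul_le_mul_of_nonneg_left hrtle hB.le) (abs_nonneg A0)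
    have h5 : B*rt*1 ≤ B*rt*(|A0| + Real.sqrt S1) :=
      mul_le_mul_of_nonneg_left h3 (by positivity)
    rw [h1]
    linarith only [h4, h5]
  -- lower bound on the inf for f0
  have hInf_lb : t * B^2 ≤
      sInf {s : ℝ | ∃ w : Fin d → ℝ, s = ‖(∑ i, w i • Ψhat i) - f0‖ ^ 2} := by
    refine le_csInf ⟨‖(∑ i, (0 : Fin d → ℝ) i • Ψhat i) - f0‖ ^ 2, ⟨0, rfl⟩⟩ ?_
    rintro s ⟨w, rfl⟩
    have hiv : (inner ℝ ((∑ i, w i • Ψhat i) - f0) v : ℝ) = -(inner ℝ f0 v : ℝ) := by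
      rw [inner_sub_left, hxv]
      ring
    have hcs := abs_real_inner_le_norm ((∑ i, w i • Ψhat i) - f0) v
    rw [hvnorm, mul_one] at hcs
    have h1 : (inner ℝ f0 v : ℝ)^2 ≤ ‖(∑ i, w i • Ψhat i) - f0‖^2 := by
      have h := pow_le_pow_left₀ (abs_nonneg _) hcs 2
      rw [sq_abs, hiv, neg_sq] at h
      exact h
    have h2 : t*B^2 = (B*rt)^2 := by rw [mul_pow, hrtsq]; ring
    have h3 : (B*rt)^2 ≤ (inner ℝ f0 v : ℝ)^2 := pow_le_pow_left₀ (by positivity) hfv 2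
    linarith only [h1, h2, h3]
  -- errSup is bounded above by B²
  have hBdd : BddAbove {e : ℝ | ∃ f ∈ F,
      e = sInf {s : ℝ | ∃ w : Fin d → ℝ, s = ‖(∑ i, w i • Ψhat i) - f‖ ^ 2}} := by
    refine ⟨B^2, ?_⟩
    rintro e ⟨g, hgF, rfl⟩
    have h1 : sInf {s : ℝ | ∃ w : Fin d → ℝ, s = ‖(∑ i, w i • Ψhat i) - g‖ ^ 2}
        ≤ ‖(∑ i : Fin d, (0:ℝ) • Ψhat i) - g‖^2 := csInf_le (hbddBelow g) ⟨0, rfl⟩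
    have h2 : ‖(∑ i : Fin d, (0:ℝ) • Ψhat i) - g‖^2 ≤ B^2 := by
      simp only [zero_smul, Finset.sum_const_zero, zero_sub, norm_neg]
      rw [← hParseval g]
      exact hgF.2.1
    linarith only [h1, h2]
  have hA : lam d / (1 - lam d) * (ε / (1 - ε)) * B ^ 2 ≤ errSup := by
    have hmem : sInf {s : ℝ | ∃ w : Fin d → ℝ, s = ‖(∑ i, w i • Ψhat i) - f0‖ ^ 2}
        ∈ {e : ℝ | ∃ f ∈ F,
          e = sInf {s : ℝ | ∃ w : Fin d → ℝ, s = ‖(∑ i, w i • Ψhat i) - f‖ ^ 2}} :=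
      ⟨f0, hmemF, rfl⟩
    calc lam d / (1 - lam d) * (ε / (1 - ε)) * B ^ 2 = t * B^2 := by rw [htdef]
      _ ≤ sInf {s : ℝ | ∃ w : Fin d → ℝ, s = ‖(∑ i, w i • Ψhat i) - f0‖ ^ 2} := hInf_lb
      _ ≤ errSup := le_csSup hBdd hmem
  ------------------------------------------------------------------
  -- PART B : equality for the optimal encoder
  ------------------------------------------------------------------
  refine ⟨hA, fun hspan => le_antisymm ?_ hA⟩
  have hzeroF : (0:H) ∈ F := by
    refine ⟨?_, ?_, ?_⟩
    · apply Summable.congr (summable_zero (α := ℝ) (β := ℕ))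
      intro j
      simp
    · simp only [inner_zero_left]
      simp [tsum_zero]
      positivity
    · simp only [inner_zero_left]
      simp [tsum_zero]
  refine csSup_le ⟨sInf {s : ℝ | ∃ w : Fin d → ℝ, s = ‖(∑ i, w i • Ψhat i) - (0:H)‖ ^ 2}, ⟨0, hzeroF, rfl⟩⟩ ?_
  rintro e ⟨g, hgF, rfl⟩
  -- project g onto the span of the top d eigenfunctions
  set u : ℕ → ℝ := fun j => (inner ℝ g (ψ j) : ℝ) with hudef
  set Pf : H := ∑ i : Fin d, u (i:ℕ) • ψ (i:ℕ) with hPfdef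
  have hPfmem : Pf ∈ Submodule.span ℝ (Set.range Ψhat) := by
    rw [hspan, hPfdef]
    apply Submodule.sum_mem
    intro i _
    exact Submodule.smul_mem _ _ (Submodule.subset_span ⟨(i:ℕ), i.isLt, rfl⟩)
  obtain ⟨w, hw⟩ := (Submodule.mem_span_range_iff_exists_fun ℝ).mp hPfmem
  have hle1 : sInf {s : ℝ | ∃ w' : Fin d → ℝ, s = ‖(∑ i, w' i • Ψhat i) - g‖ ^ 2}
      ≤ ‖Pf - g‖^2 := csInf_le (hbddBelow g) ⟨w, by rw [hw]⟩
  -- compute ‖Pf - g‖²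
  have hg_inner : ∀ j : ℕ, (inner ℝ (Pf - g) (ψ j) : ℝ) = if j < d then 0 else -u j := by
    intro j
    rw [inner_sub_left, hPfdef, hinner_sum d (fun i : Fin d => u (i:ℕ)) j]
    by_cases h : j < d
    · rw [dif_pos h, if_pos h]
      simp [hudef]
    · rw [dif_neg h, if_neg h, zero_sub]
  have hw1s : Summable (fun j => if j < d then u j ^ 2 else 0) := by
    apply summable_of_ne_finset_zero (s := Finset.range d)
    intro j hj
    rw [if_neg (by simpa using hj)]
  have husq : Summable (fun j => u j ^ 2) := by
    have h := hsummable g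
    simpa [hudef] using h
  have hw2s : Summable (fun j => if j < d then 0 else u j ^ 2) := by
    apply Summable.congr (husq.sub hw1s)
    intro j
    by_cases h : j < d <;> simp [h]
  set S : ℝ := ∑' j, (if j < d then 0 else u j ^ 2) with hSdef
  set T : ℝ := ∑' j, (if j < d then u j ^ 2 else 0) with hTdef
  have hSnn : 0 ≤ S := tsum_nonneg fun j => by by_cases h : j < d <;> simp [h] <;> positivity
  have hTnn : 0 ≤ T := tsum_nonneg fun j => by by_cases h : j < d <;> simp [h] <;> positivity
  have hST : S + T ≤ B^2 := by
    have hadd : S + T = ∑' j, u j ^ 2 := by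
      rw [hSdef, hTdef, ← Summable.tsum_add hw2s hw1s]
      congr 1; funext j
      by_cases h : j < d <;> simp [h]
    rw [hadd]
    have h := hgF.2.1
    simpa [hudef] using h
  have hnormg : ‖Pf - g‖^2 = S := by
    rw [hSdef, ← hParseval (Pf - g)]
    congr 1; funext j
    rw [hg_inner j]
    by_cases h : j < d <;> simp [h]
  -- the eigen-constraint controls the tail S
  have hεT : -ε * T + K * S ≤ 0 := by
    have hlowS : Summable (fun j => if j < d then -ε * u j ^ 2 else K * u j ^ 2) := by
      apply Summable.congr ((hw1s.mul_left (-ε)).add (hw2s.mul_left K))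
      intro j
      by_cases h : j < d <;> simp [h]
    have hlowsum : ∑' j, (if j < d then -ε * u j ^ 2 else K * u j ^ 2) = -ε * T + K * S := by
      rw [hSdef, hTdef, ← tsum_mul_left, ← tsum_mul_left,
        ← Summable.tsum_add (hw1s.mul_left (-ε)) (hw2s.mul_left K)]
      congr 1; funext j
      by_cases h : j < d <;> simp [h]
    have hQsummable : Summable (fun j => Q j * u j ^ 2) := by
      have h := hgF.1
      simpa [hudef, hQdef] using h
    have hle : ∑' j, (if j < d then -ε * u j ^ 2 else K * u j ^ 2)
        ≤ ∑' j, Q j * u j ^ 2 := by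
      apply Summable.tsum_le_tsum _ hlowS hQsummable
      intro j
      by_cases h : j < d
      · rw [if_pos h]
        have hq : -ε ≤ Q j := hQ0 ▸ hQmono 0 j (Nat.zero_le j)
        exact mul_le_mul_of_nonneg_right hq (sq_nonneg _)
      · rw [if_neg h]
        exact mul_le_mul_of_nonneg_right (hKdef ▸ hQmono d j (le_of_not_gt h)) (sq_nonneg _)
    have hQle0 : ∑' j, Q j * u j ^ 2 ≤ 0 := by
      have h := hgF.2.2
      simpa [hudef, hQdef] using h
    linarith only [hlowsum ▸ hle, hQle0]
  have hSfinal : S ≤ t * B^2 := by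
    have h1 : S * (K + ε) ≤ ε * B^2 := by
      have hm : ε*(S+T) ≤ ε*B^2 := mul_le_mul_of_nonneg_left hST hε0.le
      linarith only [hεT, hm]
    have h2 : (K+ε)*(t*B^2) = ε*B^2 := by rw [show (K+ε)*(t*B^2) = (K+ε)*t*B^2 by ring, htKε]
    nlinarith only [h1, h2, hKε_pos]
  calc sInf {s : ℝ | ∃ w' : Fin d → ℝ, s = ‖(∑ i, w' i • Ψhat i) - g‖ ^ 2}
      ≤ ‖Pf - g‖^2 := hle1
    _ = S := hnormg
    _ ≤ t * B^2 := hSfinal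
    _ = lam d / (1 - lam d) * (ε / (1 - ε)) * B ^ 2 := by rw [htdef]
end

section
/- Sufficiency direction of encoder optimality: if Ψ̂ spans the top-d eigenspace span{ψ₁,…,ψ_d}, then for every f = ∑_i u_i ψ_i ∈ F_B(Γ;ε), the residual a := ∑_{i ≥ d+1} u_i² satisfies a ≤ (λ_{d+1}/(1−λ_{d+1})) · (ε/(1−ε)) · B². -/
/-- sufficiency direction of encoder optimality: if `f = ∑ u_i ψ_i`
belongs to `F_B(Γ;ε)` (i.e. `∑ u_i² ≤ B²` and `∑ ((1−ε−λ_i)/λ_i) u_i² ≤ 0`), then the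
residual beyond the top-`d` eigenspace, `a = ∑_{i ≥ d+1} u_i²` (0-indexed: `i ≥ d`),
satisfies `a ≤ (λ_{d+1}/(1−λ_{d+1})) (ε/(1−ε)) B²`.  Eigenvalues are 1-indexed in the
paper; here `lam 0 = λ₁ = 1` and `lam d = λ_{d+1}`. -/
theorem top_d_eigenspace_residual_bound
    (d : ℕ) (lam u : ℕ → ℝ) (ε B : ℝ)
    (hlam1 : lam 0 = 1) (hmono : Antitone lam) (hpos : ∀ i, 0 < lam i)
    (hlamd : lam d < 1)
    (hε : 0 < ε ∧ ε < 1) (hB : 0 < B)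
    (hu2 : Summable (fun i => u i ^ 2))
    (hcs : Summable (fun i => ((1 - ε - lam i) / lam i) * u i ^ 2))
    (hnorm : (∑' i, u i ^ 2) ≤ B ^ 2)
    (hconstraint : (∑' i, ((1 - ε - lam i) / lam i) * u i ^ 2) ≤ 0) :
    (∑' i, if d ≤ i then u i ^ 2 else 0)
      ≤ (lam d / (1 - lam d)) * (ε / (1 - ε)) * B ^ 2 := by
  obtain ⟨hε0, hε1⟩ := hε
  set K : ℝ := (1 - ε - lam d) / lam d with hK
  set fA : ℕ → ℝ := fun i => if d ≤ i then u i ^ 2 else 0 with hfA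
  set fB : ℕ → ℝ := fun i => if i < d then u i ^ 2 else 0 with hfB
  have hAsum : Summable fA :=
    Summable.of_nonneg_of_le (fun i => by simp only [hfA]; split <;> positivity)
      (fun i => by simp only [hfA]; split <;> simp [sq_nonneg]) hu2
  have hBsum : Summable fB :=
    Summable.of_nonneg_of_le (fun i => by simp only [hfB]; split <;> positivity)
      (fun i => by simp only [hfB]; split <;> simp [sq_nonneg]) hu2
  set a := ∑' i, fA i with ha
  set b := ∑' i, fB i with hb
  have ha0 : 0 ≤ a := tsum_nonneg (by intro i; simp only [hfA]; split <;> positivity)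
  have hb0 : 0 ≤ b := tsum_nonneg (by intro i; simp only [hfB]; split <;> positivity)
  have habB : a + b ≤ B ^ 2 := by
    have := Summable.tsum_add hAsum hBsum
    have heq : ∀ i, fA i + fB i = u i ^ 2 := by
      intro i; simp only [hfA, hfB]
      rcases le_or_gt d i with h | h
      · rw [if_pos h, if_neg (by omega)]; ring
      · rw [if_neg (by omega), if_pos h]; ring
    calc a + b = ∑' i, (fA i + fB i) := (Summable.tsum_add hAsum hBsum).symm
      _ = ∑' i, u i ^ 2 := by exact tsum_congr heq
      _ ≤ B ^ 2 := hnorm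
  -- key inequality: K * a + (-ε) * b ≤ 0
  have hkey : K * a + (-ε) * b ≤ 0 := by
    have hsumh : Summable (fun i => K * fA i + (-ε) * fB i) :=
      (hAsum.mul_left K).add (hBsum.mul_left (-ε))
    have h1 : ∀ i, K * fA i + (-ε) * fB i ≤ ((1 - ε - lam i) / lam i) * u i ^ 2 := by
      intro i
      rcases le_or_gt d i with h | h
      · simp only [hfA, hfB, if_pos h, if_neg (by omega : ¬ i < d), mul_zero, add_zero]
        have hli : lam i ≤ lam d := hmono h
        have hKle : K ≤ (1 - ε - lam i) / lam i := by
          rw [hK, div_le_div_iff₀ (hpos d) (hpos i)]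
          nlinarith [hpos i, hpos d]
        exact mul_le_mul_of_nonneg_right hKle (by positivity)
      · simp only [hfA, hfB, if_neg (by omega : ¬ d ≤ i), if_pos h, mul_zero, zero_add]
        have hli : lam i ≤ 1 := hlam1 ▸ hmono (Nat.zero_le i)
        have hle : -ε ≤ (1 - ε - lam i) / lam i := by
          rw [le_div_iff₀ (hpos i)]
          nlinarith [hpos i]
        exact mul_le_mul_of_nonneg_right hle (by positivity)
    calc K * a + (-ε) * b = ∑' i, (K * fA i + (-ε) * fB i) := by
          rw [Summable.tsum_add (hAsum.mul_left K) (hBsum.mul_left (-ε)),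
            tsum_mul_left, tsum_mul_left]
      _ ≤ ∑' i, ((1 - ε - lam i) / lam i) * u i ^ 2 := Summable.tsum_le_tsum h1 hsumh hcs
      _ ≤ 0 := hconstraint
  have hKd : K * lam d = 1 - ε - lam d := div_mul_cancel₀ _ (hpos d).ne'
  have hld : 0 < lam d := hpos d
  have h1l : 0 < 1 - lam d := by linarith
  have h1e : 0 < 1 - ε := by linarith
  have hkey2 : (1 - ε - lam d) * a ≤ ε * (b * lam d) := by
    have h := mul_le_mul_of_nonneg_right hkey hld.le
    have h2 : K * lam d * a = (1 - ε - lam d) * a := by rw [hKd]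
    nlinarith [h, h2]
  have h3 : ε * lam d * b ≤ ε * lam d * (B ^ 2 - a) :=
    mul_le_mul_of_nonneg_left (by linarith) (by positivity)
  rw [div_mul_div_comm, div_mul_eq_mul_div, le_div_iff₀ (by positivity)]
  nlinarith [hkey2, h3]
end

section
/- Let P be a d×∞ real matrix with linearly independent rows representing G := P P^T positive definite, and let D be a d×d diagonal matrix with positive entries d_i ≥ d_min > 0 representing diag(λ̄_1,…,λ̄_d) with λ̄_d = d_min. Then the operator norm satisfies ‖P^T D^{-1} (P P^T)^{-1} P‖₂ ≤ d_min^{-1} · √(λ_max(G)/λ_min(G)). -/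
open Finset Matrix

lemma herm_quad_bounds' {d : ℕ} (A : Matrix (Fin d) (Fin d) ℝ) (hA : A.IsHermitian)
    (x : Fin d → ℝ) (lo hi : ℝ) (hlo : ∀ i, lo ≤ hA.eigenvalues i)
    (hhi : ∀ i, hA.eigenvalues i ≤ hi) :
    lo * (x ⬝ᵥ x) ≤ x ⬝ᵥ A *ᵥ x ∧ x ⬝ᵥ A *ᵥ x ≤ hi * (x ⬝ᵥ x) := by
  set U := (hA.eigenvectorUnitary : Matrix (Fin d) (Fin d) ℝ) with hU
  have hstar : star U = Uᵀ := by
    ext i j; simp [Matrix.star_eq_conjTranspose, Matrix.conjTranspose]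
  set z := Uᵀ *ᵥ x with hz
  have hq : x ⬝ᵥ A *ᵥ x = ∑ i, hA.eigenvalues i * z i ^ 2 := by
    conv_lhs => rw [hA.spectral_theorem, Unitary.conjStarAlgAut_apply]
    rw [← hU, hstar, ← Matrix.mulVec_mulVec, ← Matrix.mulVec_mulVec, Matrix.dotProduct_mulVec,
      ← Matrix.mulVec_transpose]
    simp [Matrix.mulVec_diagonal, dotProduct, Finset.mul_sum]
    exact Finset.sum_congr rfl fun i _ => by ring
  have hn : x ⬝ᵥ x = ∑ i, z i ^ 2 := by
    have h1 : U * Uᵀ = 1 := by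
      rw [← hstar]; exact (Matrix.mem_unitaryGroup_iff).mp hA.eigenvectorUnitary.2
    have : x ⬝ᵥ x = x ⬝ᵥ (U * Uᵀ) *ᵥ x := by rw [h1]; simp
    rw [this, ← Matrix.mulVec_mulVec, Matrix.dotProduct_mulVec, ← Matrix.mulVec_transpose]
    simp [dotProduct, sq]
    rfl
  constructor
  · rw [hq, hn, Finset.mul_sum]
    exact Finset.sum_le_sum fun i _ => mul_le_mul_of_nonneg_right (hlo i) (sq_nonneg _)
  · rw [hq, hn, Finset.mul_sum]
    exact Finset.sum_le_sum fun i _ => mul_le_mul_of_nonneg_right (hhi i) (sq_nonneg _)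

/-- operator-norm bound for `Pᵀ D⁻¹ (P Pᵀ)⁻¹ P`.  Here `P : ℝ^d → ℓ²`
has rows `P i ∈ ℓ²`, `G = P Pᵀ` is positive definite, `D = diag(d₁,…,d_d)` with
`d_i ≥ d_min > 0`.  Then `‖Pᵀ D⁻¹ G⁻¹ P‖₂ ≤ d_min⁻¹ √(λ_max(G)/λ_min(G))`, stated in
squared form on the quadratic action: `∑ₙ ((Mv)ₙ)² ≤ d_min⁻² (λ_max/λ_min) ∑ₙ vₙ²`. -/
theorem operator_norm_bound_whitened_projection
    (d : ℕ) (hd : 0 < d) (P : Fin d → ℕ → ℝ) (D : Fin d → ℝ) (dmin : ℝ)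
    (hdmin : 0 < dmin) (hD : ∀ i, dmin ≤ D i)
    (hrows : ∀ i, Summable (fun n => (P i n) ^ 2))
    (hprods : ∀ i j, Summable (fun n => P i n * P j n))
    (G : Matrix (Fin d) (Fin d) ℝ)
    (hG : G = fun i j => ∑' n, P i n * P j n)
    (hGpd : G.PosDef) (hHerm : G.IsHermitian)
    (v : ℕ → ℝ) (hv : Summable (fun n => (v n) ^ 2))
    (hPv : ∀ j, Summable (fun m => P j m * v m))
    (Mv : ℕ → ℝ)
    (hMv : Mv = fun n => ∑ i : Fin d, ∑ j : Fin d,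
        P i n * (D i)⁻¹ * (G⁻¹ i j) * (∑' m, P j m * v m)) :
    (∑' n, (Mv n) ^ 2)
      ≤ (dmin⁻¹) ^ 2 * ((⨆ i, hHerm.eigenvalues i) / (⨅ i, hHerm.eigenvalues i)) *
          ∑' n, (v n) ^ 2 := by
  classical
  have hne : Nonempty (Fin d) := ⟨⟨0, hd⟩⟩
  set lam : Fin d → ℝ := hHerm.eigenvalues with hlam
  have hpos : ∀ i, 0 < lam i := fun i => hGpd.eigenvalues_pos i
  set lmax : ℝ := ⨆ i, lam i with hlmax
  set lmin : ℝ := ⨅ i, lam i with hlmin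
  have hBA : BddAbove (Set.range lam) := (Set.finite_range lam).bddAbove
  have hBB : BddBelow (Set.range lam) := (Set.finite_range lam).bddBelow
  have hle_max : ∀ i, lam i ≤ lmax := fun i => le_ciSup hBA i
  have hmin_le : ∀ i, lmin ≤ lam i := fun i => ciInf_le hBB i
  have hlmin_pos : 0 < lmin := by
    obtain ⟨i0, hi0⟩ := Finite.exists_min lam
    exact lt_of_lt_of_le (hpos i0) (le_ciInf hi0)
  have hlmax_pos : 0 < lmax :=
    lt_of_lt_of_le (hpos (Classical.arbitrary _)) (hle_max _)
  -- vectors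
  set w : Fin d → ℝ := fun j => ∑' m, P j m * v m with hw
  set y : Fin d → ℝ := G⁻¹ *ᵥ w with hy
  set c : Fin d → ℝ := fun i => (D i)⁻¹ * y i with hc
  have hGy : G *ᵥ y = w := by
    rw [hy, Matrix.mulVec_mulVec, Matrix.mul_nonsing_inv _ hGpd.det_pos.ne'.isUnit,
      Matrix.one_mulVec]
  -- summability / tsum computations
  have hsum2 : ∀ a b : Fin d → ℝ,
      Summable (fun n => (∑ i, a i * P i n) * (∑ j, b j * P j n)) := by
    intro a b
    have he : (fun n => (∑ i, a i * P i n) * (∑ j, b j * P j n))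
        = fun n => ∑ i, ∑ j, (a i * b j) * (P i n * P j n) := by
      funext n; rw [Finset.sum_mul_sum]
      exact Finset.sum_congr rfl fun i _ => Finset.sum_congr rfl fun j _ => by ring
    rw [he]
    exact summable_sum fun i _ => summable_sum fun j _ => ((hprods i j).mul_left _)
  have hts2 : ∀ a b : Fin d → ℝ,
      (∑' n, (∑ i, a i * P i n) * (∑ j, b j * P j n)) = a ⬝ᵥ G *ᵥ b := by
    intro a b
    have he : ∀ n, (∑ i, a i * P i n) * (∑ j, b j * P j n)
        = ∑ i, ∑ j, (a i * b j) * (P i n * P j n) := by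
      intro n; rw [Finset.sum_mul_sum]
      exact Finset.sum_congr rfl fun i _ => Finset.sum_congr rfl fun j _ => by ring
    calc (∑' n, (∑ i, a i * P i n) * (∑ j, b j * P j n))
        = ∑' n, ∑ i, ∑ j, (a i * b j) * (P i n * P j n) := tsum_congr he
      _ = ∑ i, ∑' n, ∑ j, (a i * b j) * (P i n * P j n) :=
          Summable.tsum_finsetSum fun i _ => summable_sum fun j _ => ((hprods i j).mul_left _)
      _ = ∑ i, ∑ j, ∑' n, (a i * b j) * (P i n * P j n) :=
          Finset.sum_congr rfl fun i _ =>
            Summable.tsum_finsetSum fun j _ => ((hprods i j).mul_left _)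
      _ = ∑ i, ∑ j, (a i * b j) * G i j := by
          refine Finset.sum_congr rfl fun i _ => Finset.sum_congr rfl fun j _ => ?_
          rw [tsum_mul_left, hG]
      _ = a ⬝ᵥ G *ᵥ b := by
          simp only [dotProduct, Matrix.mulVec, Finset.mul_sum]
          exact Finset.sum_congr rfl fun i _ => Finset.sum_congr rfl fun j _ => by ring
  have hsumc : ∀ a : Fin d → ℝ, Summable (fun n => (∑ i, a i * P i n) * v n) := by
    intro a
    have he : (fun n => (∑ i, a i * P i n) * v n)
        = fun n => ∑ i, a i * (P i n * v n) := by
      funext n; rw [Finset.sum_mul]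
      exact Finset.sum_congr rfl fun i _ => by ring
    rw [he]
    exact summable_sum fun i _ => ((hPv i).mul_left _)
  have htsc : ∀ a : Fin d → ℝ, (∑' n, (∑ i, a i * P i n) * v n) = a ⬝ᵥ w := by
    intro a
    calc (∑' n, (∑ i, a i * P i n) * v n)
        = ∑' n, ∑ i, a i * (P i n * v n) := by
          refine tsum_congr fun n => ?_
          rw [Finset.sum_mul]; exact Finset.sum_congr rfl fun i _ => by ring
      _ = ∑ i, ∑' n, a i * (P i n * v n) :=
          Summable.tsum_finsetSum fun i _ => ((hPv i).mul_left _)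
      _ = ∑ i, a i * ∑' n, P i n * v n := by
          exact Finset.sum_congr rfl fun i _ => tsum_mul_left
      _ = a ⬝ᵥ w := rfl
  -- projection bound : y ⬝ᵥ w ≤ ∑' v²
  have hproj : y ⬝ᵥ w ≤ ∑' n, (v n) ^ 2 := by
    set S : ℕ → ℝ := fun n => ∑ i, y i * P i n with hS
    have hSS : Summable (fun n => S n * S n) := hsum2 y y
    have hSv : Summable (fun n => S n * v n) := hsumc y
    have hsum_expr : Summable (fun n => 2 * (S n * v n) - S n * S n) :=
      (hSv.mul_left 2).sub hSS
    have h0 : (0:ℝ) ≤ ∑' n, (v n - S n) ^ 2 := tsum_nonneg fun n => sq_nonneg _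
    have heq : ∑' n, (v n - S n) ^ 2
        = (∑' n, (v n) ^ 2) - ∑' n, (2 * (S n * v n) - S n * S n) := by
      rw [← Summable.tsum_sub hv hsum_expr]
      exact tsum_congr fun n => by ring
    have h2 : (∑' n, (2 * (S n * v n) - S n * S n))
        = 2 * (y ⬝ᵥ w) - y ⬝ᵥ G *ᵥ y := by
      rw [Summable.tsum_sub (hSv.mul_left 2) hSS, tsum_mul_left, htsc y, hts2 y y]
    have hyG : y ⬝ᵥ G *ᵥ y = y ⬝ᵥ w := by rw [hGy]
    rw [heq, h2, hyG] at h0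
    linarith
  -- Mv as a single linear combination
  have hMvS : Mv = fun n => ∑ i, c i * P i n := by
    funext n
    rw [hMv]
    refine Finset.sum_congr rfl fun i _ => ?_
    have hyi : y i = ∑ j, G⁻¹ i j * (∑' m, P j m * v m) := by
      simp [hy, Matrix.mulVec, dotProduct, hw]
    have : (∑ j, P i n * (D i)⁻¹ * G⁻¹ i j * (∑' m, P j m * v m))
        = P i n * (D i)⁻¹ * ∑ j, G⁻¹ i j * (∑' m, P j m * v m) := by
      rw [Finset.mul_sum]; exact Finset.sum_congr rfl fun j _ => by ring
    rw [this, ← hyi, hc]; ring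
  have hL : (∑' n, (Mv n) ^ 2) = c ⬝ᵥ G *ᵥ c := by
    rw [hMvS, ← hts2 c c]
    exact tsum_congr fun n => by ring
  -- eigenvalue bounds on quadratic forms
  have hupp := (herm_quad_bounds' G hHerm c lmin lmax hmin_le hle_max).2
  have hyb := (herm_quad_bounds' G hHerm y lmin lmax hmin_le hle_max).1
  have hyG : y ⬝ᵥ G *ᵥ y = y ⬝ᵥ w := by rw [hGy]
  have hyy : y ⬝ᵥ y ≤ (∑' n, (v n) ^ 2) / lmin := by
    rw [le_div_iff₀ hlmin_pos]
    calc y ⬝ᵥ y * lmin = lmin * (y ⬝ᵥ y) := by ring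
      _ ≤ y ⬝ᵥ G *ᵥ y := hyb
      _ = y ⬝ᵥ w := hyG
      _ ≤ ∑' n, (v n) ^ 2 := hproj
  have hcc : c ⬝ᵥ c ≤ (dmin⁻¹) ^ 2 * (y ⬝ᵥ y) := by
    simp only [dotProduct, Finset.mul_sum]
    refine Finset.sum_le_sum fun i _ => ?_
    have h1 : (D i)⁻¹ ≤ dmin⁻¹ := by
      apply inv_anti₀ hdmin (hD i)
    have h2 : (0:ℝ) ≤ (D i)⁻¹ := inv_nonneg.mpr (le_trans hdmin.le (hD i))
    have hcic : c i = (D i)⁻¹ * y i := rfl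
    rw [hcic]
    have h3 := mul_le_mul_of_nonneg_right
      (mul_le_mul h1 h1 h2 (inv_nonneg.mpr hdmin.le)) (mul_self_nonneg (y i))
    nlinarith [h3]
  calc (∑' n, (Mv n) ^ 2) = c ⬝ᵥ G *ᵥ c := hL
    _ ≤ lmax * (c ⬝ᵥ c) := hupp
    _ ≤ lmax * ((dmin⁻¹) ^ 2 * (y ⬝ᵥ y)) :=
        mul_le_mul_of_nonneg_left hcc hlmax_pos.le
    _ ≤ lmax * ((dmin⁻¹) ^ 2 * ((∑' n, (v n) ^ 2) / lmin)) := by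
        refine mul_le_mul_of_nonneg_left
          (mul_le_mul_of_nonneg_left hyy (by positivity)) hlmax_pos.le
    _ = (dmin⁻¹) ^ 2 * (lmax / lmin) * ∑' n, (v n) ^ 2 := by ring
end
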